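/- arXiv:1404.2705 — 6 statements merged into one kernel-verified Lean document; each statement's English description precedes it below -/
import Mathlib

section
/- Let z ∈ ℂ with z ≠ 0 and z² not a negative real number, and let N ≥ 1 be an integer. Then TS_N(z) + R_N(z) = R_1(z). In other words, the divergence of the truncated Stirling series as N grows is exactly counterbalanced by the regularized remainder, and the sum is independent of the truncation parameter N. -/
open MeasureTheory

/-- Leading terms of Stirling's approximation: `F(z) = (z - 1/2)·Log z − z + (1/2)·log(2π)`. -/
noncomputable def F (z : ℂ) : ℂ :=
  (z - 1/2) * Complex.log z - z + (1/2) * (Real.log (2 * Real.pi) : ℂ)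

/-- Truncated Stirling series `TS_N(z)`. -/
noncomputable def TS (N : ℕ) (z : ℂ) : ℂ :=
  ∑ k ∈ Finset.Icc 1 (N - 1),
    2 * (-1)^(k+1) * (Nat.factorial (2*k - 2) : ℂ) * riemannZeta (2*(k:ℂ)) /
      ((2 * (Real.pi : ℂ))^(2*k) * z^(2*k - 1))

/-- Borel-summed regularized remainder `R_N(z)`. -/
noncomputable def R (N : ℕ) (z : ℂ) : ℂ :=
  2 * (-1)^(N+1) * z * (2 * (Real.pi : ℂ) * z)^((2:ℤ) - 2*(N:ℤ)) *
    ∑' n : ℕ, ((n:ℂ) + 1)^((2:ℤ) - 2*(N:ℤ)) *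
      ∫ y in Set.Ioi (0:ℝ),
        (y:ℂ)^(2*N - 2) * Real.exp (-y) /
          ((y:ℂ)^2 + 4 * (Real.pi : ℂ)^2 * ((n:ℂ) + 1)^2 * z^2)

namespace StirlingAux

open Complex Set

/-- The closed set of nonpositive real numbers inside `ℂ`. -/
noncomputable def Sneg : Set ℂ := {x : ℂ | x.re ≤ 0 ∧ x.im = 0}

lemma isClosed_Sneg : IsClosed Sneg :=
  (isClosed_le Complex.continuous_re continuous_const).inter
    (isClosed_eq Complex.continuous_im continuous_const)

variable {z : ℂ}

lemma d_pos (hz : z ≠ 0) (hz2 : ∀ r : ℝ, r < 0 → z^2 ≠ (r : ℂ)) :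
    0 < Metric.infDist (z^2) Sneg := by
  rw [← isClosed_Sneg.notMem_iff_infDist_pos ⟨0, by simp [Sneg]⟩]
  rintro ⟨h1, h2⟩
  have hre : z^2 = (((z^2).re : ℝ) : ℂ) := by
    apply Complex.ext <;> simp [h2]
  rcases lt_or_eq_of_le h1 with h | h
  · exact hz2 _ h hre
  · apply hz
    have h0 : z^2 = 0 := by rw [hre, h]; simp
    exact pow_eq_zero_iff (by norm_num) |>.mp h0

lemma infDist_le_abs_add (t : ℝ) (ht : 0 ≤ t) :
    Metric.infDist (z^2) Sneg ≤ ‖(t:ℂ) + z^2‖ := by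
  have hmem : ((-t : ℝ) : ℂ) ∈ Sneg := ⟨by simpa using neg_nonpos.mpr ht, by simp⟩
  have h := Metric.infDist_le_dist_of_mem (x := z^2) hmem
  rwa [Complex.dist_eq, Complex.ofReal_neg, sub_neg_eq_add, add_comm] at h

lemma denom_lb (n : ℕ) (y : ℝ) :
    4*Real.pi^2*((n:ℝ)+1)^2 * Metric.infDist (z^2) Sneg
      ≤ ‖(y:ℂ)^2 + 4 * (Real.pi : ℂ)^2 * ((n:ℂ) + 1)^2 * z^2‖ := by
  have hc0 : (0:ℝ) < 4*Real.pi^2*((n:ℝ)+1)^2 := by positivity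
  have key : (y:ℂ)^2 + 4 * (Real.pi : ℂ)^2 * ((n:ℂ) + 1)^2 * z^2
      = ((4*Real.pi^2*((n:ℝ)+1)^2 : ℝ) : ℂ)
        * (((y^2/(4*Real.pi^2*((n:ℝ)+1)^2) : ℝ) : ℂ) + z^2) := by
    have hne : ((4*Real.pi^2*((n:ℝ)+1)^2 : ℝ) : ℂ) ≠ 0 := by
      exact_mod_cast hc0.ne'
    have hdiv : ((y^2/(4*Real.pi^2*((n:ℝ)+1)^2) : ℝ) : ℂ)
        = (y:ℂ)^2 / ((4*Real.pi^2*((n:ℝ)+1)^2 : ℝ) : ℂ) := by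
      push_cast; ring
    rw [hdiv, mul_add, mul_div_cancel₀ _ hne]
    push_cast
    ring
  rw [key, norm_mul, Complex.norm_real, Real.norm_eq_abs, _root_.abs_of_pos hc0]
  exact mul_le_mul_of_nonneg_left (infDist_le_abs_add _ (by positivity)) hc0.le

lemma denom_ne (hz : z ≠ 0) (hz2 : ∀ r : ℝ, r < 0 → z^2 ≠ (r : ℂ)) (n : ℕ) (y : ℝ) :
    (y:ℂ)^2 + 4 * (Real.pi : ℂ)^2 * ((n:ℂ) + 1)^2 * z^2 ≠ 0 := by
  intro h
  have hlb := denom_lb (z := z) n y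
  rw [h, norm_zero] at hlb
  exact absurd hlb (not_le.mpr (mul_pos (by positivity) (d_pos hz hz2)))

lemma integrable_base (m : ℕ) :
    IntegrableOn (fun y : ℝ => y^m * Real.exp (-y)) (Ioi 0) := by
  have h := Real.GammaIntegral_convergent (s := (m:ℝ)+1) (by positivity)
  refine h.congr_fun (fun x _ => ?_) measurableSet_Ioi
  show Real.exp (-x) * x ^ ((m:ℝ)+1-1) = x^m * Real.exp (-x)
  rw [add_sub_cancel_right, Real.rpow_natCast, mul_comm]

lemma integral_base (m : ℕ) :
    ∫ y in Ioi (0:ℝ), y^m * Real.exp (-y) = m.factorial := by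
  have h1 := Real.Gamma_eq_integral (s := (m:ℝ)+1) (by positivity)
  rw [Real.Gamma_nat_eq_factorial] at h1
  rw [h1]
  refine setIntegral_congr_fun measurableSet_Ioi fun x _ => ?_
  rw [add_sub_cancel_right, Real.rpow_natCast, mul_comm]

lemma integrable_base_complex (m : ℕ) :
    IntegrableOn (fun y : ℝ => (y:ℂ)^m * (Real.exp (-y) : ℂ)) (Ioi 0) := by
  have h : IntegrableOn (fun y : ℝ => ((y^m * Real.exp (-y) : ℝ) : ℂ)) (Ioi 0) :=
    (integrable_base m).ofReal
  simpa using h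

lemma integral_base_complex (m : ℕ) :
    ∫ y in Ioi (0:ℝ), (y:ℂ)^m * (Real.exp (-y) : ℂ) = (m.factorial : ℂ) := by
  have h : ∫ y in Ioi (0:ℝ), ((y^m * Real.exp (-y) : ℝ) : ℂ)
      = ((∫ y in Ioi (0:ℝ), y^m * Real.exp (-y) : ℝ) : ℂ) := integral_ofReal
  rw [integral_base] at h
  have h2 : ∫ y in Ioi (0:ℝ), (y:ℂ)^m * (Real.exp (-y) : ℂ) = ((m.factorial : ℝ) : ℂ) := by
    rw [← h]
    norm_cast
  rw [h2]
  norm_cast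

lemma f_le (hz : z ≠ 0) (hz2 : ∀ r : ℝ, r < 0 → z^2 ≠ (r : ℂ)) (m n : ℕ)
    {y : ℝ} (hy : y ∈ Ioi (0:ℝ)) :
    ‖(y:ℂ)^m * (Real.exp (-y) : ℂ) / ((y:ℂ)^2 + 4 * (Real.pi : ℂ)^2 * ((n:ℂ) + 1)^2 * z^2)‖
      ≤ y^m * Real.exp (-y) / (4*Real.pi^2*((n:ℝ)+1)^2 * Metric.infDist (z^2) Sneg) := by
  have hy0 : (0:ℝ) < y := hy
  have hd0 := d_pos hz hz2
  have hlb := denom_lb (z := z) n y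
  rw [norm_div, norm_mul, norm_pow, Complex.norm_real, Complex.norm_real,
    Real.norm_eq_abs, Real.norm_eq_abs, _root_.abs_of_pos hy0,
    _root_.abs_of_pos (Real.exp_pos _)]
  gcongr

lemma integrable_f (hz : z ≠ 0) (hz2 : ∀ r : ℝ, r < 0 → z^2 ≠ (r : ℂ)) (m n : ℕ) :
    IntegrableOn (fun y : ℝ =>
      (y:ℂ)^m * Real.exp (-y) / ((y:ℂ)^2 + 4 * (Real.pi : ℂ)^2 * ((n:ℂ) + 1)^2 * z^2))
      (Ioi 0) := by
  have hd0 := d_pos hz hz2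
  have hcont : Continuous (fun y : ℝ =>
      (y:ℂ)^m * Real.exp (-y) / ((y:ℂ)^2 + 4 * (Real.pi : ℂ)^2 * ((n:ℂ) + 1)^2 * z^2)) := by
    apply Continuous.div
    · exact (Complex.continuous_ofReal.pow m).mul
        (Complex.continuous_ofReal.comp (Real.continuous_exp.comp continuous_neg))
    · exact ((Complex.continuous_ofReal.pow 2).add continuous_const)
    · exact fun y => denom_ne hz hz2 n y
  refine Integrable.mono'
    ((integrable_base m).div_const (4*Real.pi^2*((n:ℝ)+1)^2 * Metric.infDist (z^2) Sneg))
    hcont.aestronglyMeasurable.restrict ?_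
  filter_upwards [ae_restrict_mem measurableSet_Ioi] with y hy
  exact f_le hz hz2 m n hy

lemma norm_I_le (hz : z ≠ 0) (hz2 : ∀ r : ℝ, r < 0 → z^2 ≠ (r : ℂ)) (m n : ℕ) :
    ‖∫ y in Ioi (0:ℝ),
        (y:ℂ)^m * Real.exp (-y) / ((y:ℂ)^2 + 4 * (Real.pi : ℂ)^2 * ((n:ℂ) + 1)^2 * z^2)‖
      ≤ (m.factorial : ℝ) / (4*Real.pi^2*((n:ℝ)+1)^2 * Metric.infDist (z^2) Sneg) := by
  have h := norm_integral_le_of_norm_le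
    ((integrable_base m).div_const (4*Real.pi^2*((n:ℝ)+1)^2 * Metric.infDist (z^2) Sneg))
    (by filter_upwards [ae_restrict_mem measurableSet_Ioi] with y hy
        exact f_le hz hz2 m n hy)
  rwa [integral_div, integral_base] at h

lemma summable_inv_sq : Summable (fun n : ℕ => 1/((n:ℝ)+1)^2) := by
  have h : Summable (fun n : ℕ => 1/((n:ℝ))^2) := Real.summable_one_div_nat_pow.mpr one_lt_two
  have h2 := (summable_nat_add_iff 1).mpr h
  simpa using h2

lemma norm_inv_pow_le (n k j : ℕ) (hjk : j ≤ k) :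
    ‖(((n:ℂ)+1)^k)⁻¹‖ ≤ 1/((n:ℝ)+1)^j := by
  rw [norm_inv, norm_pow]
  have h1 : ‖(n:ℂ)+1‖ = (n:ℝ)+1 := by
    rw [show ((n:ℂ)+1) = (((n+1:ℕ)):ℂ) by push_cast; ring, Complex.norm_natCast]
    push_cast; ring
  rw [h1, one_div]
  exact inv_anti₀ (by positivity) (pow_le_pow_right₀ (by linarith [Nat.cast_nonneg (α := ℝ) n]) hjk)

lemma summable_u (k : ℕ) (hk : 2 ≤ k) :
    Summable (fun n : ℕ => (((n:ℂ)+1)^k)⁻¹) :=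
  Summable.of_norm_bounded summable_inv_sq (fun n => norm_inv_pow_le n k 2 hk)

lemma summable_v (hz : z ≠ 0) (hz2 : ∀ r : ℝ, r < 0 → z^2 ≠ (r : ℂ)) (m : ℕ) :
    Summable (fun n : ℕ => (((n:ℂ)+1)^(2*m))⁻¹ *
      ∫ y in Ioi (0:ℝ),
        (y:ℂ)^(2*m) * Real.exp (-y) / ((y:ℂ)^2 + 4 * (Real.pi : ℂ)^2 * ((n:ℂ) + 1)^2 * z^2)) := by
  have hd0 := d_pos hz hz2
  refine Summable.of_norm_bounded
    (g := fun n : ℕ => ((2*m).factorial : ℝ) / (4*Real.pi^2*Metric.infDist (z^2) Sneg) * (1/((n:ℝ)+1)^2))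
    (summable_inv_sq.mul_left _) (fun n => ?_)
  rw [norm_mul]
  calc ‖(((n:ℂ)+1)^(2*m))⁻¹‖ * ‖∫ y in Ioi (0:ℝ), _‖
      ≤ 1 * (((2*m).factorial : ℝ) / (4*Real.pi^2*((n:ℝ)+1)^2 * Metric.infDist (z^2) Sneg)) := by
        refine mul_le_mul ?_ (norm_I_le hz hz2 (2*m) n) (norm_nonneg _) one_pos.le
        simpa using norm_inv_pow_le n (2*m) 0 (Nat.zero_le _)
    _ = ((2*m).factorial : ℝ) / (4*Real.pi^2*Metric.infDist (z^2) Sneg) * (1/((n:ℝ)+1)^2) := by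
        rw [one_mul, div_mul_div_comm, mul_one]
        congr 1
        ring

lemma zeta_eq (k : ℕ) (hk : 1 ≤ k) :
    riemannZeta (2*(k:ℂ)) = ∑' n : ℕ, (((n:ℂ)+1)^(2*k))⁻¹ := by
  have hs : (1:ℝ) < (2*(k:ℂ)).re := by
    have h2 : (2*(k:ℂ)) = ((2*k:ℕ):ℂ) := by push_cast; ring
    rw [h2, Complex.natCast_re]
    exact_mod_cast (by omega : 1 < 2*k)
  rw [zeta_eq_tsum_one_div_nat_add_one_cpow hs]
  refine tsum_congr fun n => ?_
  rw [show (2*(k:ℂ)) = ((2*k : ℕ) : ℂ) by push_cast; ring, Complex.cpow_natCast, one_div]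

lemma integral_step (hz : z ≠ 0) (hz2 : ∀ r : ℝ, r < 0 → z^2 ≠ (r : ℂ)) (m n : ℕ) :
    (∫ y in Ioi (0:ℝ), (y:ℂ)^(2*m+2) * Real.exp (-y) /
        ((y:ℂ)^2 + 4 * (Real.pi : ℂ)^2 * ((n:ℂ) + 1)^2 * z^2))
      = (((2*m).factorial : ℕ) : ℂ)
        - 4 * (Real.pi : ℂ)^2 * ((n:ℂ) + 1)^2 * z^2 *
          ∫ y in Ioi (0:ℝ), (y:ℂ)^(2*m) * Real.exp (-y) /
            ((y:ℂ)^2 + 4 * (Real.pi : ℂ)^2 * ((n:ℂ) + 1)^2 * z^2) := by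
  have heq : ∀ y : ℝ,
      (y:ℂ)^(2*m+2) * Real.exp (-y) / ((y:ℂ)^2 + 4 * (Real.pi : ℂ)^2 * ((n:ℂ) + 1)^2 * z^2)
        = (y:ℂ)^(2*m) * Real.exp (-y)
          - 4 * (Real.pi : ℂ)^2 * ((n:ℂ) + 1)^2 * z^2 *
            ((y:ℂ)^(2*m) * Real.exp (-y) /
              ((y:ℂ)^2 + 4 * (Real.pi : ℂ)^2 * ((n:ℂ) + 1)^2 * z^2)) := by
    intro y
    have hD := denom_ne hz hz2 n y
    field_simp
    ring
  simp_rw [heq]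
  rw [integral_sub (integrable_base_complex (2*m))
      ((integrable_f hz hz2 (2*m) n).const_mul _), integral_const_mul, integral_base_complex]

end StirlingAux

open StirlingAux Set

lemma R_step (z : ℂ) (hz : z ≠ 0)
    (hz2 : ∀ r : ℝ, r < 0 → z^2 ≠ (r : ℂ)) (N : ℕ) (hN : 1 ≤ N) :
    R N z = 2 * (-1)^(N+1) * (Nat.factorial (2*N - 2) : ℂ) * riemannZeta (2*(N:ℂ)) /
      ((2 * (Real.pi : ℂ))^(2*N) * z^(2*N - 1)) + R (N+1) z := by
  obtain ⟨m, rfl⟩ : ∃ m, N = m + 1 := ⟨N - 1, by omega⟩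
  have hπ : (Real.pi : ℂ) ≠ 0 := Complex.ofReal_ne_zero.mpr Real.pi_ne_zero
  have hP : 2 * (Real.pi : ℂ) * z ≠ 0 := by
    simp [hπ, hz]
  unfold R
  -- normalize exponents
  have e1 : (2:ℤ) - 2*(((m+1):ℕ):ℤ) = -((2*m:ℕ):ℤ) := by push_cast; ring
  have e2 : (2:ℤ) - 2*(((m+1+1):ℕ):ℤ) = -((2*m+2:ℕ):ℤ) := by push_cast; ring
  have e3 : 2*(m+1) - 2 = 2*m := by omega
  have e4 : 2*(m+1+1) - 2 = 2*m+2 := by omega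
  have e5 : 2*(m+1) - 1 = 2*m+1 := by omega
  simp only [e1, e2, e3, e4, e5, zpow_neg, zpow_natCast]
  -- rewrite the (N+1)-tsum
  have hsum : ∑' n : ℕ, (((n:ℂ)+1)^(2*m+2))⁻¹ *
      ∫ y in Ioi (0:ℝ), (y:ℂ)^(2*m+2) * Real.exp (-y) /
        ((y:ℂ)^2 + 4 * (Real.pi : ℂ)^2 * ((n:ℂ) + 1)^2 * z^2)
      = (((2*m).factorial : ℕ) : ℂ) * riemannZeta (2*((m+1:ℕ):ℂ))
        - 4 * (Real.pi : ℂ)^2 * z^2 * ∑' n : ℕ, (((n:ℂ)+1)^(2*m))⁻¹ *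
            ∫ y in Ioi (0:ℝ), (y:ℂ)^(2*m) * Real.exp (-y) /
              ((y:ℂ)^2 + 4 * (Real.pi : ℂ)^2 * ((n:ℂ) + 1)^2 * z^2) := by
    have hpt : ∀ n : ℕ, (((n:ℂ)+1)^(2*m+2))⁻¹ *
        (∫ y in Ioi (0:ℝ), (y:ℂ)^(2*m+2) * Real.exp (-y) /
          ((y:ℂ)^2 + 4 * (Real.pi : ℂ)^2 * ((n:ℂ) + 1)^2 * z^2))
        = (((2*m).factorial : ℕ) : ℂ) * (((n:ℂ)+1)^(2*m+2))⁻¹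
          - 4 * (Real.pi : ℂ)^2 * z^2 * ((((n:ℂ)+1)^(2*m))⁻¹ *
            ∫ y in Ioi (0:ℝ), (y:ℂ)^(2*m) * Real.exp (-y) /
              ((y:ℂ)^2 + 4 * (Real.pi : ℂ)^2 * ((n:ℂ) + 1)^2 * z^2)) := by
      intro n
      rw [StirlingAux.integral_step hz hz2 m n]
      have hn : ((n:ℂ)+1) ≠ 0 := by
        intro h
        have := congrArg Complex.re h
        simp at this
        linarith [Nat.cast_nonneg (α := ℝ) n]
      field_simp
      ring
    rw [tsum_congr hpt, Summable.tsum_sub ((StirlingAux.summable_u (2*m+2) (by omega)).mul_left _)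
        ((StirlingAux.summable_v hz hz2 m).mul_left _), tsum_mul_left, tsum_mul_left,
      StirlingAux.zeta_eq (m+1) (by omega)]
    simp only [show 2*(m+1) = 2*m+2 from by ring]
  rw [hsum]
  have hzeta : riemannZeta (2*(((m+1):ℕ):ℂ)) = riemannZeta (2*((m+1:ℕ):ℂ)) := rfl
  set V : ℂ := ∑' n : ℕ, (((n:ℂ)+1)^(2*m))⁻¹ *
      ∫ y in Ioi (0:ℝ), (y:ℂ)^(2*m) * Real.exp (-y) /
        ((y:ℂ)^2 + 4 * (Real.pi : ℂ)^2 * ((n:ℂ) + 1)^2 * z^2) with hV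
  set Z : ℂ := riemannZeta (2*((m+1:ℕ):ℂ)) with hZ
  field_simp
  ring


/-- The divergence of the truncated Stirling series as `N` grows is exactly
counterbalanced by the regularized remainder: for `z ≠ 0` with `z²` not a
negative real number, `TS_N(z) + R_N(z) = R_1(z)` for every `N ≥ 1`. -/
theorem truncatedSum_add_remainder_eq_remainder_one (z : ℂ) (hz : z ≠ 0)
    (hz2 : ∀ r : ℝ, r < 0 → z^2 ≠ (r : ℂ)) (N : ℕ) (hN : 1 ≤ N) :
    TS N z + R N z = R 1 z := by
  induction N, hN using Nat.le_induction with
  | base => simp [TS]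
  | succ n hn ih =>
    obtain ⟨p, rfl⟩ : ∃ p, n = p + 1 := ⟨n - 1, by omega⟩
    have hTS : TS (p+1+1) z = TS (p+1) z
        + 2 * (-1)^((p+1)+1) * (Nat.factorial (2*(p+1) - 2) : ℂ) *
            riemannZeta (2*((p+1:ℕ):ℂ)) /
          ((2 * (Real.pi : ℂ))^(2*(p+1)) * z^(2*(p+1) - 1)) := by
      unfold TS
      rw [show (p+1+1) - 1 = p + 1 from rfl, show (p+1) - 1 = p from rfl,
        Finset.sum_Icc_succ_top (by omega)]
    rw [hTS, add_assoc, ← R_step z hz hz2 (p+1) (by omega), ih]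
end

section
/- Euler's constant γ satisfies γ = 1/2 + ∫_0^∞ e^{−y} ( (1/2)·coth(y/2) − 1/y ) dy, where coth w = cosh w / sinh w. -/
open MeasureTheory

/-- The real hyperbolic cotangent. -/
noncomputable def rCoth (y : ℝ) : ℝ := Real.cosh y / Real.sinh y

section aux
open Set Real Filter Topology

lemma gamma_int : ∫ t in Ioi (0:ℝ), Real.exp (-t) * Real.log t = -Real.eulerMascheroniConstant := by
  have h1 := Complex.hasDerivAt_GammaIntegral (s := 1) (by norm_num)
  have heq : Complex.Gamma =ᶠ[nhds (1:ℂ)] Complex.GammaIntegral := by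
    filter_upwards [IsOpen.mem_nhds (isOpen_lt continuous_const Complex.continuous_re)
      (by norm_num : (0:ℝ) < (1:ℂ).re)] with s hs
    exact Complex.Gamma_eq_integral hs
  have h2 : HasDerivAt Complex.Gamma
      (∫ t : ℝ in Ioi 0, (t:ℂ) ^ ((1:ℂ) - 1) * (Real.log t * Real.exp (-t))) 1 :=
    HasDerivAt.congr_of_eventuallyEq h1 heq
  have h3 := Complex.hasDerivAt_Gamma_one
  have h4 := h2.unique h3
  have h5 : (∫ t : ℝ in Ioi 0, (t:ℂ) ^ ((1:ℂ) - 1) * (Real.log t * Real.exp (-t)))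
      = ((∫ t : ℝ in Ioi 0, Real.log t * Real.exp (-t) : ℝ) : ℂ) := by
    rw [show (∫ t : ℝ in Ioi 0, (t:ℂ) ^ ((1:ℂ) - 1) * (Real.log t * Real.exp (-t)))
        = ∫ t : ℝ in Ioi 0, ((Real.log t * Real.exp (-t) : ℝ) : ℂ) from
      setIntegral_congr_fun measurableSet_Ioi (fun t ht => by simp)]
    exact integral_ofReal
  rw [h5] at h4
  have h6 : (∫ t : ℝ in Ioi 0, Real.log t * Real.exp (-t)) = -Real.eulerMascheroniConstant := by
    exact_mod_cast h4
  rw [← h6]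
  refine setIntegral_congr_fun measurableSet_Ioi (fun t ht => ?_)
  ring

lemma f1int : IntegrableOn (fun y => Real.exp (-y) * y) (Ioi (0:ℝ)) := by
  have := Real.GammaIntegral_convergent (s := 2) (by norm_num)
  refine this.congr_fun (fun x hx => ?_) measurableSet_Ioi
  norm_num [Real.rpow_one]

lemma f1val : ∫ y in Ioi (0:ℝ), Real.exp (-y) * y = 1 := by
  have h := Real.Gamma_eq_integral (s := 2) (by norm_num)
  have h2 : Real.Gamma 2 = 1 := by
    have := Real.Gamma_nat_eq_factorial 1
    norm_num at this
    convert this using 2; norm_num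
  rw [h2] at h
  rw [h]
  refine setIntegral_congr_fun measurableSet_Ioi (fun x hx => ?_)
  norm_num [Real.rpow_one]

lemma img1 : (fun t => Real.exp (-t)) '' Ioi (0:ℝ) = Ioo 0 1 := by
  ext u
  constructor
  · rintro ⟨t, ht, rfl⟩
    exact ⟨Real.exp_pos _, by simpa using Real.exp_lt_one_iff.mpr (neg_neg_iff_pos.mpr ht)⟩
  · rintro ⟨h0, h1⟩
    exact ⟨-Real.log u, by simpa using Real.log_neg h0 h1, by simp [Real.exp_log h0]⟩

lemma img2 : (fun t => 1 - Real.exp (-t)) '' Ioi (0:ℝ) = Ioo 0 1 := by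
  have : (fun t => 1 - Real.exp (-t)) = (fun u => 1 - u) ∘ (fun t => Real.exp (-t)) := rfl
  rw [this, image_comp, img1]
  ext u
  simp only [mem_image, mem_Ioo]
  constructor
  · rintro ⟨v, ⟨h0, h1⟩, rfl⟩; constructor <;> linarith
  · rintro ⟨h0, h1⟩; exact ⟨1 - u, ⟨by linarith, by linarith⟩, by ring⟩

lemma subst1 (g : ℝ → ℝ) :
    (IntegrableOn g (Ioo (0:ℝ) 1) ↔
      IntegrableOn (fun y => Real.exp (-y) * g (1 - Real.exp (-y))) (Ioi 0)) ∧
    ∫ u in Ioo (0:ℝ) 1, g u = ∫ y in Ioi (0:ℝ), Real.exp (-y) * g (1 - Real.exp (-y)) := by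
  have hd : ∀ x ∈ Ioi (0:ℝ), HasDerivWithinAt (fun t => 1 - Real.exp (-t))
      (Real.exp (-x)) (Ioi 0) x := by
    intro x hx
    simpa using (((Real.hasDerivAt_exp (-x)).comp x (hasDerivAt_neg x)).const_sub 1).hasDerivWithinAt
  have hinj : InjOn (fun t => 1 - Real.exp (-t)) (Ioi (0:ℝ)) := by
    intro a _ b _ hab
    simp only [sub_right_inj, Real.exp_eq_exp, neg_inj] at hab
    exact hab
  constructor
  · rw [← img2, integrableOn_image_iff_integrableOn_abs_deriv_smul measurableSet_Ioi hd hinj g]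
    refine integrableOn_congr_fun (fun x hx => ?_) measurableSet_Ioi
    simp [abs_of_pos (Real.exp_pos _), smul_eq_mul]
  · rw [← img2, integral_image_eq_integral_abs_deriv_smul measurableSet_Ioi hd hinj g]
    refine setIntegral_congr_fun measurableSet_Ioi (fun x hx => ?_)
    simp [abs_of_pos (Real.exp_pos _), smul_eq_mul]

lemma subst2 (g : ℝ → ℝ) :
    (IntegrableOn g (Ioo (0:ℝ) 1) ↔
      IntegrableOn (fun y => Real.exp (-y) * g (Real.exp (-y))) (Ioi 0)) ∧
    ∫ u in Ioo (0:ℝ) 1, g u = ∫ y in Ioi (0:ℝ), Real.exp (-y) * g (Real.exp (-y)) := by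
  have hd : ∀ x ∈ Ioi (0:ℝ), HasDerivWithinAt (fun t => Real.exp (-t))
      (-Real.exp (-x)) (Ioi 0) x := by
    intro x hx
    simpa [Function.comp_def] using ((Real.hasDerivAt_exp (-x)).comp x (hasDerivAt_neg x)).hasDerivWithinAt
  have hinj : InjOn (fun t => Real.exp (-t)) (Ioi (0:ℝ)) := by
    intro a _ b _ hab
    simp only [Real.exp_eq_exp, neg_inj] at hab; exact hab
  constructor
  · rw [← img1, integrableOn_image_iff_integrableOn_abs_deriv_smul measurableSet_Ioi hd hinj g]
    refine integrableOn_congr_fun (fun x hx => ?_) measurableSet_Ioi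
    simp [abs_of_pos (Real.exp_pos _), smul_eq_mul]
  · rw [← img1, integral_image_eq_integral_abs_deriv_smul measurableSet_Ioi hd hinj g]
    refine setIntegral_congr_fun measurableSet_Ioi (fun x hx => ?_)
    simp [abs_of_pos (Real.exp_pos _), smul_eq_mul]

lemma logint : IntegrableOn Real.log (Ioo (0:ℝ) 1) := by
  rw [(subst2 Real.log).1]
  have h : IntegrableOn (fun y => -(Real.exp (-y) * y)) (Ioi (0:ℝ)) := f1int.neg
  refine h.congr_fun (fun x hx => ?_) measurableSet_Ioi
  simp [Real.log_exp]

lemma logval : ∫ u in Ioo (0:ℝ) 1, Real.log u = -1 := by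
  rw [(subst2 Real.log).2]
  rw [show (∫ y in Ioi (0:ℝ), Real.exp (-y) * Real.log (Real.exp (-y)))
      = ∫ y in Ioi (0:ℝ), -(Real.exp (-y) * y) from
    setIntegral_congr_fun measurableSet_Ioi (fun x hx => by simp [Real.log_exp])]
  rw [integral_neg, f1val]

lemma f2int : IntegrableOn (fun y => Real.exp (-y) * Real.log (1 - Real.exp (-y))) (Ioi (0:ℝ)) :=
  (subst1 Real.log).1.mp logint

lemma f2val : ∫ y in Ioi (0:ℝ), Real.exp (-y) * Real.log (1 - Real.exp (-y)) = -1 := by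
  rw [← (subst1 Real.log).2, logval]

lemma f3meas : Measurable (fun y : ℝ => Real.exp (-y) * Real.log y) :=
  (Real.measurable_exp.comp measurable_neg).mul Real.measurable_log

lemma f3int : IntegrableOn (fun y => Real.exp (-y) * Real.log y) (Ioi (0:ℝ)) := by
  rw [← Ioo_union_Ici_eq_Ioi (zero_lt_one : (0:ℝ) < 1), integrableOn_union]
  constructor
  · refine Integrable.mono' (logint.abs) (f3meas.aestronglyMeasurable) ?_
    rw [ae_restrict_iff' measurableSet_Ioo]
    filter_upwards with y hy
    rw [norm_mul, Real.norm_eq_abs, Real.norm_eq_abs, abs_of_pos (Real.exp_pos _)]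
    calc Real.exp (-y) * |Real.log y| ≤ 1 * |Real.log y| := by
          apply mul_le_mul_of_nonneg_right _ (abs_nonneg _)
          exact Real.exp_le_one_iff.mpr (by linarith [hy.1])
      _ = |Real.log y| := one_mul _
  · refine Integrable.mono' (f1int.mono_set (fun x hx => show (0:ℝ) < x from lt_of_lt_of_le zero_lt_one hx))
      (f3meas.aestronglyMeasurable) ?_
    rw [ae_restrict_iff' measurableSet_Ici]
    filter_upwards with y hy
    rw [norm_mul, Real.norm_eq_abs, Real.norm_eq_abs, abs_of_pos (Real.exp_pos _),
      abs_of_nonneg (Real.log_nonneg hy)]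
    have h1 : (0:ℝ) < y := lt_of_lt_of_le zero_lt_one hy
    have := Real.log_le_sub_one_of_pos h1
    nlinarith [Real.exp_pos (-y)]

lemma hmeas : Measurable (fun y : ℝ => 1/(Real.exp y - 1) - Real.exp (-y)/y) :=
  (measurable_const.div (Real.measurable_exp.sub measurable_const)).sub
    ((Real.measurable_exp.comp measurable_neg).div measurable_id)

lemma hbound1 : ∀ y ∈ Ioc (0:ℝ) 1, ‖1/(Real.exp y - 1) - Real.exp (-y)/y‖ ≤ 1 := by
  intro y hy
  have hy0 : 0 < y := hy.1
  have he : y + 1 ≤ Real.exp y := Real.add_one_le_exp y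
  have he' : 1 - y ≤ Real.exp (-y) := by
    have := Real.add_one_le_exp (-y); linarith
  have hd : 0 < Real.exp y - 1 := by
    have := Real.exp_lt_exp.mpr hy0; simp [Real.exp_zero] at this; linarith
  have hinv : Real.exp (-y) * Real.exp y = 1 := by
    rw [← Real.exp_add]; simp
  have hexpos := Real.exp_pos (-y)
  have key : 1/(Real.exp y - 1) - Real.exp (-y)/y = (y - 1 + Real.exp (-y))/(y * (Real.exp y - 1)) := by
    field_simp
    nlinarith [hinv, mul_pos hy0 hd]
  rw [key, Real.norm_eq_abs, abs_div, abs_of_nonneg (by nlinarith), abs_of_pos (by positivity)]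
  rw [div_le_one (by positivity)]
  -- y - 1 + e^{-y} ≤ y(1 - e^{-y}) ≤ y(e^y - 1)
  have h1 : y - 1 + Real.exp (-y) ≤ y * (1 - Real.exp (-y)) := by nlinarith
  have h2 : 1 - Real.exp (-y) ≤ Real.exp y - 1 := by nlinarith
  nlinarith

lemma hint : IntegrableOn (fun y => 1/(Real.exp y - 1) - Real.exp (-y)/y) (Ioi (0:ℝ)) := by
  rw [← Ioc_union_Ioi_eq_Ioi (zero_le_one : (0:ℝ) ≤ 1), integrableOn_union]
  constructor
  · refine Integrable.mono' (g := fun _ => (1:ℝ))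
      ((integrableOn_const_iff (C := (1:ℝ))).mpr (Or.inr (by simp))) hmeas.aestronglyMeasurable ?_
    rw [ae_restrict_iff' measurableSet_Ioc]
    filter_upwards with y hy
    exact hbound1 y hy
  · refine Integrable.mono' (g := fun y => 3 * Real.exp (-y))
      (((exp_neg_integrableOn_Ioi 1 (zero_lt_one)).congr_fun (fun x hx => by norm_num)
        measurableSet_Ioi).const_mul 3) hmeas.aestronglyMeasurable ?_
    rw [ae_restrict_iff' measurableSet_Ioi]
    filter_upwards with y hy
    have hy1 : (1:ℝ) < y := hy
    have hy0 : (0:ℝ) < y := by linarith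
    have hexpos := Real.exp_pos (-y)
    have hinv : Real.exp (-y) * Real.exp y = 1 := by rw [← Real.exp_add]; simp
    have h2 : (2:ℝ) ≤ Real.exp y := by
      calc (2:ℝ) ≤ y + 1 := by linarith
        _ ≤ Real.exp y := Real.add_one_le_exp y
    have hd : 0 < Real.exp y - 1 := by linarith
    have hA : 0 < 1/(Real.exp y - 1) := by positivity
    have hA2 : 1/(Real.exp y - 1) ≤ 2 * Real.exp (-y) := by
      rw [div_le_iff₀ hd]
      nlinarith
    have hB : 0 < Real.exp (-y)/y := by positivity
    have hB2 : Real.exp (-y)/y ≤ Real.exp (-y) := by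
      rw [div_le_iff₀ hy0]; nlinarith
    rw [Real.norm_eq_abs, abs_le]
    constructor <;> nlinarith

noncomputable def uu (y : ℝ) : ℝ := Real.log (Real.exp y - 1) - Real.log y
noncomputable def GG (y : ℝ) : ℝ := -(Real.exp (-y) * uu y)
noncomputable def GG' (y : ℝ) : ℝ :=
  Real.exp (-y) * uu y - (1/(Real.exp y - 1) - Real.exp (-y)/y)

lemma exp_sub_one_pos {y : ℝ} (hy : 0 < y) : 0 < Real.exp y - 1 := by
  have := Real.exp_lt_exp.mpr hy; simp only [Real.exp_zero] at this; linarith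

lemma one_sub_exp_neg_pos {y : ℝ} (hy : 0 < y) : 0 < 1 - Real.exp (-y) := by
  have : Real.exp (-y) < 1 := Real.exp_lt_one_iff.mpr (by linarith)
  linarith

lemma uu_eq {y : ℝ} (hy : 0 < y) :
    uu y = y + Real.log (1 - Real.exp (-y)) - Real.log y := by
  have h1 : Real.exp y - 1 = Real.exp y * (1 - Real.exp (-y)) := by
    rw [mul_sub, mul_one, ← Real.exp_add]; simp
  rw [uu, h1, Real.log_mul (Real.exp_ne_zero y) (ne_of_gt (one_sub_exp_neg_pos hy)),
    Real.log_exp]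

lemma GG_deriv {y : ℝ} (hy : 0 < y) : HasDerivAt GG (GG' y) y := by
  have hne : Real.exp y - 1 ≠ 0 := ne_of_gt (exp_sub_one_pos hy)
  have h1 : HasDerivAt (fun y : ℝ => Real.exp (-y)) (-Real.exp (-y)) y := by
    simpa [Function.comp_def] using (Real.hasDerivAt_exp (-y)).comp y (hasDerivAt_neg y)
  have h2 : HasDerivAt (fun y : ℝ => Real.log (Real.exp y - 1))
      ((Real.exp y - 1)⁻¹ * Real.exp y) y :=
    by have := (Real.hasDerivAt_log hne).comp y ((Real.hasDerivAt_exp y).sub_const 1); exact this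
  have h3 : HasDerivAt Real.log y⁻¹ y := Real.hasDerivAt_log (ne_of_gt hy)
  have hu : HasDerivAt uu ((Real.exp y - 1)⁻¹ * Real.exp y - y⁻¹) y := h2.sub h3
  have hprod := (h1.mul hu).neg
  refine hprod.congr_deriv ?_
  have hinv : Real.exp (-y) * Real.exp y = 1 := by rw [← Real.exp_add]; simp
  rw [GG']
  field_simp
  ring_nf
  nlinarith [hinv, sq_nonneg y]

lemma GG_top : Tendsto GG atTop (𝓝 0) := by
  have t1 : Tendsto (fun y : ℝ => Real.exp (-y) * y) atTop (𝓝 0) := by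
    have := tendsto_pow_mul_exp_neg_atTop_nhds_zero 1
    simpa [mul_comm] using this
  have t2 : Tendsto (fun y : ℝ => Real.exp (-y) * Real.log (1 - Real.exp (-y))) atTop (𝓝 0) := by
    have ha : Tendsto (fun y : ℝ => Real.log (1 - Real.exp (-y))) atTop (𝓝 0) := by
      have : Tendsto (fun y : ℝ => 1 - Real.exp (-y)) atTop (𝓝 1) := by
        simpa using tendsto_const_nhds.sub Real.tendsto_exp_neg_atTop_nhds_zero
      have := (Real.continuousAt_log (by norm_num : (1:ℝ) ≠ 0)).tendsto.comp this
      simpa [Function.comp_def] using this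
    simpa using Real.tendsto_exp_neg_atTop_nhds_zero.mul ha
  have t3 : Tendsto (fun y : ℝ => Real.exp (-y) * Real.log y) atTop (𝓝 0) := by
    refine squeeze_zero_norm' ?_ t1
    filter_upwards [eventually_ge_atTop (1:ℝ)] with y hy
    rw [norm_mul, Real.norm_eq_abs, Real.norm_eq_abs, abs_of_pos (Real.exp_pos _),
      abs_of_nonneg (Real.log_nonneg hy)]
    have h1 : (0:ℝ) < y := lt_of_lt_of_le zero_lt_one hy
    have := Real.log_le_sub_one_of_pos h1
    nlinarith [Real.exp_pos (-y)]
  have : Tendsto (fun y : ℝ => -(Real.exp (-y) * y + Real.exp (-y) * Real.log (1 - Real.exp (-y))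
      - Real.exp (-y) * Real.log y)) atTop (𝓝 0) := by
    have := ((t1.add t2).sub t3).neg
    simpa using this
  refine this.congr' ?_
  filter_upwards [eventually_gt_atTop (0:ℝ)] with y hy
  rw [GG, uu_eq hy]; ring

lemma GG_cont0 : ContinuousWithinAt GG (Ici (0:ℝ)) 0 := by
  have h0 : GG 0 = 0 := by simp [GG, uu]
  rw [← Set.Ioi_insert]
  rw [continuousWithinAt_insert_self]
  rw [ContinuousWithinAt, h0]
  have hslope : Tendsto (fun y : ℝ => (Real.exp y - 1)/y) (𝓝[>] 0) (𝓝 1) := by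
    have := (hasDerivAt_iff_tendsto_slope.mp (Real.hasDerivAt_exp 0))
    have h2 := this.mono_left (nhdsWithin_mono 0 (fun x hx => ne_of_gt hx))
    simp only [Real.exp_zero] at h2
    refine h2.congr ?_
    intro y; simp [slope_def_field]
  have hlog : Tendsto (fun y : ℝ => Real.log ((Real.exp y - 1)/y)) (𝓝[>] 0) (𝓝 0) := by
    have := (Real.continuousAt_log (by norm_num : (1:ℝ) ≠ 0)).tendsto.comp hslope
    simpa [Function.comp_def] using this
  have hexp : Tendsto (fun y : ℝ => Real.exp (-y)) (𝓝[>] 0) (𝓝 1) := by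
    have h : Tendsto (fun y : ℝ => Real.exp (-y)) (𝓝 0) (𝓝 (Real.exp (-0))) :=
      (Real.continuous_exp.comp continuous_neg).continuousAt
    simpa using h.mono_left nhdsWithin_le_nhds
  have hmain : Tendsto (fun y : ℝ => -(Real.exp (-y) * Real.log ((Real.exp y - 1)/y)))
      (𝓝[>] 0) (𝓝 0) := by
    have := (hexp.mul hlog).neg
    simpa using this
  refine hmain.congr' ?_
  filter_upwards [self_mem_nhdsWithin] with y hy
  have hy : (0:ℝ) < y := hy
  rw [GG, uu, Real.log_div (ne_of_gt (exp_sub_one_pos hy)) (ne_of_gt hy)]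

lemma euu_int : IntegrableOn (fun y => Real.exp (-y) * uu y) (Ioi (0:ℝ)) := by
  have h : IntegrableOn (fun y : ℝ => Real.exp (-y) * y
      + Real.exp (-y) * Real.log (1 - Real.exp (-y)) - Real.exp (-y) * Real.log y) (Ioi 0) :=
    (f1int.add f2int).sub f3int
  refine h.congr_fun (fun y hy => ?_) measurableSet_Ioi
  rw [uu_eq hy]; ring

lemma euu_val : ∫ y in Ioi (0:ℝ), Real.exp (-y) * uu y = Real.eulerMascheroniConstant := by
  rw [show (∫ y in Ioi (0:ℝ), Real.exp (-y) * uu y)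
      = ∫ y in Ioi (0:ℝ), (Real.exp (-y) * y + Real.exp (-y) * Real.log (1 - Real.exp (-y))
        - Real.exp (-y) * Real.log y) from
    setIntegral_congr_fun measurableSet_Ioi (fun y hy => by rw [uu_eq hy]; ring)]
  have hadd : IntegrableOn (fun y : ℝ => Real.exp (-y) * y
      + Real.exp (-y) * Real.log (1 - Real.exp (-y))) (Ioi 0) := f1int.add f2int
  rw [integral_sub hadd f3int, integral_add f1int f2int, f1val, f2val, gamma_int]
  ring

lemma hval : ∫ y in Ioi (0:ℝ), (1/(Real.exp y - 1) - Real.exp (-y)/y)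
    = Real.eulerMascheroniConstant := by
  have hG'int : IntegrableOn GG' (Ioi (0:ℝ)) := euu_int.sub hint
  have key := integral_Ioi_of_hasDerivAt_of_tendsto GG_cont0
    (fun y hy => GG_deriv hy) hG'int GG_top
  have h0 : GG 0 = 0 := by simp [GG, uu]
  rw [h0, sub_zero] at key
  have : ∫ y in Ioi (0:ℝ), GG' y
      = (∫ y in Ioi (0:ℝ), Real.exp (-y) * uu y)
        - ∫ y in Ioi (0:ℝ), (1/(Real.exp y - 1) - Real.exp (-y)/y) :=
    integral_sub euu_int hint
  rw [key, euu_val] at this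
  linarith

lemma ptwise {y : ℝ} (hy : 0 < y) :
    Real.exp (-y) * ((1/2) * rCoth (y/2) - 1/y)
      = (1/(Real.exp y - 1) - Real.exp (-y)/y) - Real.exp (-y)/2 := by
  set a := Real.exp (y/2) with ha
  have ha1 : 1 < a := by
    rw [ha]; have := Real.exp_lt_exp.mpr (by linarith : (0:ℝ) < y/2)
    simpa using this
  have ha0 : 0 < a := by linarith
  have h2 : a * a = Real.exp y := by rw [ha, ← Real.exp_add]; ring_nf
  have hexpneg : Real.exp (-y) = (a * a)⁻¹ := by rw [h2, Real.exp_neg]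
  have hhalfneg : Real.exp (-(y/2)) = a⁻¹ := by rw [ha, Real.exp_neg]
  have hsinh : Real.sinh (y/2) = (a - a⁻¹)/2 := by rw [Real.sinh_eq, hhalfneg]
  have hcosh : Real.cosh (y/2) = (a + a⁻¹)/2 := by rw [Real.cosh_eq, hhalfneg]
  have hane : a - a⁻¹ ≠ 0 := by
    have : a⁻¹ < 1 := by rw [inv_lt_one_iff₀]; right; exact ha1
    intro h; nlinarith
  have hey : Real.exp y - 1 ≠ 0 := by
    rw [← h2]; intro h; nlinarith
  have ha2 : a * a - 1 ≠ 0 := by nlinarith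
  rw [rCoth, hsinh, hcosh, hexpneg, ← h2]
  field_simp
  have ha3 : a ^ 2 - 1 ≠ 0 := by nlinarith
  field_simp
  ring

lemma expint : IntegrableOn (fun y => Real.exp (-y)) (Ioi (0:ℝ)) :=
  (exp_neg_integrableOn_Ioi 0 zero_lt_one).congr_fun (fun x _ => by norm_num) measurableSet_Ioi

end aux

/-- Integral representation of Euler's constant:
`γ = 1/2 + ∫₀^∞ e^{−y} ((1/2)·coth(y/2) − 1/y) dy`. -/
theorem eulerMascheroni_eq_half_add_integral :
    Real.eulerMascheroniConstant =
      1/2 + ∫ y in Set.Ioi (0:ℝ), Real.exp (-y) * ((1/2) * rCoth (y/2) - 1/y) := by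
  rw [show (∫ y in Set.Ioi (0:ℝ), Real.exp (-y) * ((1/2) * rCoth (y/2) - 1/y))
      = ∫ y in Set.Ioi (0:ℝ),
          ((1/(Real.exp y - 1) - Real.exp (-y)/y) - Real.exp (-y)/2) from
    setIntegral_congr_fun measurableSet_Ioi (fun y hy => ptwise hy)]
  rw [integral_sub hint (expint.div_const 2), hval, integral_div, integral_exp_neg_Ioi_zero]
  ring
end

section
/- The reciprocal logarithm numbers satisfy the recurrence A_k = ∑_{j=0}^{k−1} (−1)^{k−j+1} A_j / (k − j + 1) for every integer k ≥ 1, where A_j are defined in the context. -/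
open MeasureTheory


lemma sum_step (k : ℕ) (t : ℝ) (p : ℕ → ℝ) (hp0 : p 0 = 1)
    (hps : ∀ j : ℕ, p (j+1) = p j * (t - 1 + (j:ℝ))) :
    ∑ j ∈ Finset.range (k+2),
        (((k+2).factorial : ℝ) / ((j.factorial:ℝ) * ((k:ℝ)+2-(j:ℝ)))) * p j
    = (∑ j ∈ Finset.range (k+1),
        (((k+1).factorial:ℝ)/((j.factorial:ℝ)*((k:ℝ)+1-(j:ℝ)))) * p j) * (t - 1 + ((k:ℝ)+1))
      + p (k+1) := by
  have hfacs : ∀ j : ℕ, ((j+1).factorial : ℝ) = ((j:ℝ)+1) * (j.factorial : ℝ) := by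
    intro j; rw [Nat.factorial_succ]; push_cast; ring
  have key : ∀ j ∈ Finset.range (k+1),
      (((k+2).factorial : ℝ) / (((j+1).factorial:ℝ) * ((k:ℝ)+2-((j:ℝ)+1)))) * p (j+1)
      = (((k+1).factorial:ℝ)/((j.factorial:ℝ)*((k:ℝ)+1-(j:ℝ)))) * p j * (t - 1 + ((k:ℝ)+1))
        + ((((k+1).factorial:ℝ)/(((j+1).factorial):ℝ)) * p (j+1)
            - (((k+1).factorial:ℝ)/((j.factorial):ℝ)) * p j) := by
    intro j hj
    have hjk : (j:ℝ) ≤ (k:ℝ) := by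
      exact_mod_cast Nat.lt_succ_iff.mp (Finset.mem_range.mp hj)
    have h1 : ((k:ℝ)+1-(j:ℝ)) ≠ 0 := by linarith
    have h2 : ((k:ℝ)+2-((j:ℝ)+1)) ≠ 0 := by linarith
    have h3 : ((j:ℝ)+1) ≠ 0 := by positivity
    have h4 : ((j.factorial:ℝ)) ≠ 0 := by positivity
    have h5 : (((k+1).factorial:ℝ)) ≠ 0 := by positivity
    have h6 : ((k:ℝ)+2) ≠ 0 := by positivity
    rw [hps j, hfacs j, hfacs (k+1)]
    push_cast
    field_simp
    ring
  rw [Finset.sum_range_succ']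
  push_cast
  rw [Finset.sum_congr rfl key, Finset.sum_add_distrib,
    Finset.sum_range_sub (fun j => (((k+1).factorial:ℝ)/((j.factorial):ℝ)) * p j),
    Finset.sum_mul]
  have h5 : (((k+1).factorial:ℝ)) ≠ 0 := by positivity
  have h6 : ((k:ℝ)+2) ≠ 0 := by positivity
  have hfk : ((k+2).factorial : ℝ) = ((k:ℝ)+2) * ((k+1).factorial : ℝ) := by
    rw [Nat.factorial_succ]; push_cast; ring
  simp only [hp0, Nat.factorial_zero, Nat.cast_one, Nat.cast_zero, hfk]
  simp only [div_self h5, div_one, one_mul, mul_one, sub_zero, mul_div_cancel_left₀ _ h6]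
  ring

lemma hasDerivAt_prodshift (k : ℕ) (t : ℝ) :
    HasDerivAt (fun t : ℝ => ∏ j ∈ Finset.range (k+1), (t - 1 + (j:ℝ)))
      (∑ j ∈ Finset.range (k+1),
        (((k+1).factorial : ℝ) / ((j.factorial : ℝ) * ((k:ℝ) + 1 - (j:ℝ)))) *
          ∏ i ∈ Finset.range j, (t - 1 + (i:ℝ))) t := by
  induction k with
  | zero =>
      have h1 : HasDerivAt (fun t : ℝ => ∏ j ∈ Finset.range 1, (t - 1 + (j:ℝ))) 1 t := by
        simp only [Finset.prod_range_one, Nat.cast_zero]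
        exact ((hasDerivAt_id t).sub_const 1).add_const 0
      convert h1 using 1
      norm_num [Finset.sum_range_one]
  | succ k ih =>
      have hlin : HasDerivAt (fun t : ℝ => t - 1 + ((k+1 : ℕ):ℝ)) 1 t :=
        ((hasDerivAt_id t).sub_const 1).add_const _
      have h2 := ih.mul hlin
      simp only [Pi.mul_def, ← Finset.prod_range_succ] at h2
      refine h2.congr_deriv (Eq.symm ?_)
      have := sum_step k t (fun j => ∏ i ∈ Finset.range j, (t - 1 + (i:ℝ)))
        (by simp) (fun j => by simp [Finset.prod_range_succ])
      push_cast at this ⊢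
      simp only [mul_one]
      rw [show k+1+1 = k+2 by omega, show ((k:ℝ)+1+1) = (k:ℝ)+2 by ring]
      exact this

lemma cont_p (j : ℕ) : Continuous (fun t : ℝ => ∏ i ∈ Finset.range j, (t - 1 + (i:ℝ))) :=
  continuous_finset_prod _ fun i _ => (continuous_id.sub continuous_const).add continuous_const


/-- The reciprocal logarithm numbers:
`A_k = ((−1)^k / k!) ∫₀¹ ∏_{j=0}^{k−1} (t − 1 + j) dt`, with `A_0 = 1`. -/
noncomputable def A (k : ℕ) : ℝ :=
  ((-1)^k / (Nat.factorial k : ℝ)) *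
    ∫ t in (0:ℝ)..1, ∏ j ∈ Finset.range k, (t - 1 + (j:ℝ))

/-- Recurrence relation for the reciprocal logarithm numbers:
`A_k = ∑_{j=0}^{k−1} (−1)^{k−j+1} A_j / (k − j + 1)` for every `k ≥ 1`. -/
theorem A_recurrence (k : ℕ) (hk : 1 ≤ k) :
    A k = ∑ j ∈ Finset.range k, (-1)^(k - j + 1) * A j / ((k - j + 1 : ℕ) : ℝ) := by
  set I : ℕ → ℝ := fun j => ∫ t in (0:ℝ)..1, ∏ i ∈ Finset.range j, (t - 1 + (i:ℝ)) with hI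
  have hA : ∀ j, A j = (-1)^j / (j.factorial:ℝ) * I j := fun j => rfl
  have hsum0 : ∑ j ∈ Finset.range (k+1),
      (((k+1).factorial : ℝ) / ((j.factorial : ℝ) * ((k:ℝ) + 1 - (j:ℝ)))) * I j = 0 := by
    have hcont : Continuous fun t : ℝ => ∑ j ∈ Finset.range (k+1),
        (((k+1).factorial : ℝ) / ((j.factorial : ℝ) * ((k:ℝ) + 1 - (j:ℝ)))) *
          ∏ i ∈ Finset.range j, (t - 1 + (i:ℝ)) :=
      continuous_finset_sum _ fun j _ => continuous_const.mul (cont_p j)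
    have h := intervalIntegral.integral_eq_sub_of_hasDerivAt
      (f := fun t : ℝ => ∏ j ∈ Finset.range (k+1), (t - 1 + (j:ℝ)))
      (fun t _ => hasDerivAt_prodshift k t) (hcont.intervalIntegrable 0 1)
    rw [intervalIntegral.integral_finset_sum
      (f := fun (j : ℕ) (t : ℝ) => (((k+1).factorial : ℝ) / ((j.factorial : ℝ) * ((k:ℝ) + 1 - (j:ℝ)))) *
          ∏ i ∈ Finset.range j, (t - 1 + (i:ℝ)))
      (fun j _ => ((continuous_const.mul (cont_p j)).intervalIntegrable 0 1))] at h
    simp only [intervalIntegral.integral_const_mul] at h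
    have h1 : (∏ j ∈ Finset.range (k+1), ((1:ℝ) - 1 + (j:ℝ))) = 0 :=
      Finset.prod_eq_zero (Finset.mem_range.mpr (by omega : 0 < k+1)) (by norm_num)
    have h0 : (∏ j ∈ Finset.range (k+1), ((0:ℝ) - 1 + (j:ℝ))) = 0 :=
      Finset.prod_eq_zero (Finset.mem_range.mpr (by omega : 1 < k+1)) (by norm_num)
    rw [h, h1, h0, sub_zero]
  have hS : ∑ j ∈ Finset.range k,
      (1/((j.factorial:ℝ) * ((k:ℝ)+1-(j:ℝ)))) * I j = - (I k / (k.factorial:ℝ)) := by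
    rw [Finset.sum_range_succ] at hsum0
    have hexp : ∑ j ∈ Finset.range k,
        (((k+1).factorial : ℝ) / ((j.factorial : ℝ) * ((k:ℝ) + 1 - (j:ℝ)))) * I j
        = ((k+1).factorial : ℝ) * ∑ j ∈ Finset.range k,
            (1/((j.factorial:ℝ) * ((k:ℝ)+1-(j:ℝ)))) * I j := by
      rw [Finset.mul_sum]
      exact Finset.sum_congr rfl fun j _ => by ring
    rw [hexp] at hsum0
    have hkk : ((k:ℝ)+1-(k:ℝ)) = 1 := by ring
    have hfac : ((k+1).factorial : ℝ) = ((k:ℝ)+1) * (k.factorial:ℝ) := by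
      rw [Nat.factorial_succ]; push_cast; ring
    rw [hkk, hfac] at hsum0
    have hk1 : ((k:ℝ)+1) ≠ 0 := by positivity
    have hkf : ((k.factorial:ℝ)) ≠ 0 := by positivity
    field_simp at hsum0 ⊢
    have hz : ((k:ℝ)+1) * ((∑ x ∈ Finset.range k,
        I x / ((x.factorial:ℝ) * ((k:ℝ) + 1 - (x:ℝ)))) * (k.factorial:ℝ) + I k) = 0 := by
      linear_combination hsum0
    rcases mul_eq_zero.mp hz with h | h
    · exact absurd h hk1
    · linarith
  have hterm : ∀ j ∈ Finset.range k,
      (-1)^(k - j + 1) * A j / ((k - j + 1 : ℕ) : ℝ)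
      = (-(-1:ℝ)^k) * ((1/((j.factorial:ℝ) * ((k:ℝ)+1-(j:ℝ)))) * I j) := by
    intro j hj
    have hjk : j < k := Finset.mem_range.mp hj
    have hcast : ((k - j + 1 : ℕ):ℝ) = (k:ℝ)+1-(j:ℝ) := by
      push_cast [Nat.cast_sub hjk.le]; ring
    have hsign : ((-1:ℝ))^(k-j) * (-1:ℝ)^j = (-1)^k := by
      rw [← pow_add, Nat.sub_add_cancel hjk.le]
    rw [hA j, hcast, show k - j + 1 = (k-j)+1 from rfl, pow_succ]
    have h1 : ((k:ℝ)+1-(j:ℝ)) ≠ 0 := by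
      have : (j:ℝ) ≤ (k:ℝ) := by exact_mod_cast hjk.le
      linarith
    have h2 : ((j.factorial:ℝ)) ≠ 0 := by positivity
    field_simp
    linear_combination (-I j) * hsign
  rw [Finset.sum_congr rfl hterm, ← Finset.mul_sum, hS, hA k]
  ring
end

section
/- ∫_0^∞ e^{−y} ( (1/2)·coth(y/2) − 1/y ) dy = ∑_{k=2}^{∞} (−1)^{k+1} A_k / k, where coth w = cosh w / sinh w and A_k are the reciprocal logarithm numbers defined in the context. -/
open MeasureTheory

open Real Set Finset



noncomputable def cb (t : ℝ) (k : ℕ) : ℝ :=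
  (∏ j ∈ Finset.range k, (t - (j:ℝ))) / (Nat.factorial k : ℝ)

lemma cb_zero (t : ℝ) : cb t 0 = 1 := by simp [cb]

lemma cb_succ (t : ℝ) (k : ℕ) : cb t (k+1) = cb t k * (t - k) / (k+1) := by
  have h1 : ((Nat.factorial (k+1) : ℕ) : ℝ) = (k+1) * (Nat.factorial k : ℝ) := by
    push_cast [Nat.factorial_succ]; ring
  rw [cb, cb, Finset.prod_range_succ, h1, div_mul_eq_mul_div, div_div, mul_comm ((k:ℝ)+1)]

lemma abs_cb_le (t : ℝ) (ht : t ∈ Set.Icc (0:ℝ) 1) (k : ℕ) :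
    |cb t (k+1)| ≤ 1 / (k+1) := by
  obtain ⟨ht0, ht1⟩ := ht
  induction k with
  | zero =>
    simp only [cb_succ, cb_zero, one_mul, Nat.cast_zero, sub_zero, zero_add, Nat.cast_zero]
    rw [abs_div, abs_one, div_le_div_iff₀ (by positivity) (by norm_num)]
    rw [one_mul, mul_one, abs_le]
    constructor <;> linarith
  | succ n ih =>
    rw [cb_succ, abs_div, abs_mul,
      abs_of_pos (show (0:ℝ) < ((n+1:ℕ):ℝ)+1 by positivity)]
    have h2 : |t - ((n+1:ℕ):ℝ)| ≤ (n:ℝ)+1 := by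
      push_cast; rw [abs_le]; constructor <;> linarith [Nat.cast_nonneg (α := ℝ) n]
    calc |cb t (n+1)| * |t - ((n+1:ℕ):ℝ)| / (((n+1:ℕ):ℝ)+1)
        ≤ (1/((n:ℝ)+1)) * ((n:ℝ)+1) / (((n+1:ℕ):ℝ)+1) := by
          have hmul : |cb t (n+1)| * |t - ((n+1:ℕ):ℝ)| ≤ (1/((n:ℝ)+1)) * ((n:ℝ)+1) :=
            mul_le_mul ih h2 (abs_nonneg _) (by positivity)
          exact div_le_div_of_nonneg_right hmul (by positivity) |>.trans_eq rfl
      _ = 1 / (((n+1:ℕ):ℝ)+1) := by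
          rw [one_div_mul_cancel (by positivity)]
      _ ≤ 1 / (((n+1:ℕ):ℝ)+1) := le_refl _

lemma abs_cb_le_one (t : ℝ) (ht : t ∈ Set.Icc (0:ℝ) 1) (k : ℕ) : |cb t k| ≤ 1 := by
  cases k with
  | zero => simp [cb_zero]
  | succ n =>
    calc |cb t (n+1)| ≤ 1/(((n:ℕ):ℝ)+1) := by exact_mod_cast abs_cb_le t ht n
      _ ≤ 1 := by rw [div_le_one (by positivity)]; linarith [Nat.cast_nonneg (α := ℝ) n]


noncomputable def Sb (t : ℝ) (n : ℕ) (x : ℝ) : ℝ :=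
  ∑ k ∈ Finset.range (n+1), cb t k * x^k
noncomputable def Db (t : ℝ) (n : ℕ) (x : ℝ) : ℝ :=
  ∑ k ∈ Finset.range (n+1), cb t k * ((k:ℝ) * x^(k-1))

lemma hasDerivAt_Sb (t : ℝ) (n : ℕ) (x : ℝ) :
    HasDerivAt (fun y => Sb t n y) (Db t n x) x := by
  apply HasDerivAt.fun_sum
  intro k _
  exact (hasDerivAt_pow k x).const_mul (cb t k)

lemma Sb_identity (t : ℝ) (n : ℕ) (x : ℝ) :
    (1+x) * Db t n x - t * Sb t n x = -((n+1) * cb t (n+1) * x^n) := by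
  induction n with
  | zero =>
    simp [Sb, Db, cb_zero, cb_succ t 0]
  | succ n ih =>
    have hS : Sb t (n+1) x = Sb t n x + cb t (n+1) * x^(n+1) := by
      rw [Sb, Finset.sum_range_succ]; rfl
    have hD : Db t (n+1) x = Db t n x + cb t (n+1) * (((n:ℝ)+1) * x^n) := by
      rw [Db, Finset.sum_range_succ]; push_cast; rfl
    have hc := cb_succ t (n+1)
    push_cast at hc
    rw [hS, hD]
    have : (1+x) * (Db t n x + cb t (n+1) * (((n:ℝ)+1) * x^n))
        - t * (Sb t n x + cb t (n+1) * x^(n+1))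
        = ((1+x) * Db t n x - t * Sb t n x) + cb t (n+1) * (((n:ℝ)+1) * x^n)
          + cb t (n+1) * (((n:ℝ)+1) * x^(n+1)) - t * cb t (n+1) * x^(n+1) := by ring
    rw [this, ih]
    have h2 : ((n:ℝ)+1+1) * cb t (n+1+1) = cb t (n+1) * (t - ((n:ℝ)+1)) := by
      rw [hc]; field_simp
    push_cast
    linear_combination (x^(n+1)) * h2

lemma Sb_zero_val (t : ℝ) (n : ℕ) : Sb t n 0 = 1 := by
  rw [Sb, Finset.sum_eq_single 0]
  · simp [cb_zero]
  · intro k _ hk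
    rcases Nat.exists_eq_succ_of_ne_zero hk with ⟨m, rfl⟩
    simp
  · simp

lemma Sb_dist (t : ℝ) (n : ℕ) {x : ℝ} (ht : t ∈ Set.Icc (0:ℝ) 1)
    (hx : x ∈ Set.Ioo (-1:ℝ) 0) :
    |Sb t n x * Real.exp (-t * Real.log (1+x)) - 1| ≤ |x|^(n+1) / (1+x)^2 := by
  obtain ⟨hx1, hx0⟩ := hx
  have h1x : (0:ℝ) < 1 + x := by linarith
  -- the auxiliary function and its derivative
  set g : ℝ → ℝ := fun s => Sb t n s * Real.exp (-t * Real.log (1+s)) with hg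
  have hderiv : ∀ s ∈ Set.Ioo x (0:ℝ), HasDerivAt g
      (Db t n s * Real.exp (-t * Real.log (1+s))
        + Sb t n s * (Real.exp (-t * Real.log (1+s)) * (-t * (1/(1+s))))) s := by
    intro s hs
    have h1s : (0:ℝ) < 1 + s := by have := hs.1; linarith
    have hlog : HasDerivAt (fun s : ℝ => Real.log (1+s)) (1/(1+s)) s := by
      have h0 : HasDerivAt (fun s : ℝ => 1 + s) 1 s := by
        simpa using (hasDerivAt_id s).const_add 1
      simpa using h0.log (ne_of_gt h1s)
    have hexp : HasDerivAt (fun s : ℝ => Real.exp (-t * Real.log (1+s)))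
        (Real.exp (-t * Real.log (1+s)) * (-t * (1/(1+s)))) s := by
      have := ((hlog.const_mul (-t)).exp)
      simpa [mul_comm, mul_assoc] using this
    exact (hasDerivAt_Sb t n s).mul hexp
  have hcont : ContinuousOn g (Set.Icc x 0) := by
    intro s hs
    have h1s : (0:ℝ) < 1 + s := by have := hs.1; linarith
    apply ContinuousWithinAt.mul
    · exact (hasDerivAt_Sb t n s).continuousAt.continuousWithinAt
    · apply ContinuousWithinAt.rexp
      apply ContinuousWithinAt.mul continuousWithinAt_const
      exact ((Real.continuousAt_log (ne_of_gt h1s)).comp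
        (by continuity : Continuous fun s : ℝ => 1 + s).continuousAt).continuousWithinAt
  obtain ⟨c, hc, hslope⟩ := exists_hasDerivAt_eq_slope g _ hx0 hcont hderiv
  have h1c : (0:ℝ) < 1 + c := by have := hc.1; linarith
  have hg0 : g 0 = 1 := by simp [hg, Sb_zero_val]
  -- bound on the derivative at c
  have hEc : Real.exp (-t * Real.log (1+c)) ≤ 1/(1+c) := by
    have hlc : Real.log (1+c) ≤ 0 :=
      Real.log_nonpos (by linarith) (by have := hc.2; linarith)
    calc Real.exp (-t * Real.log (1+c)) ≤ Real.exp (-Real.log (1+c)) := by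
          apply Real.exp_le_exp.2
          nlinarith [ht.1, ht.2]
      _ = 1/(1+c) := by rw [Real.exp_neg, Real.exp_log h1c, one_div]
  have hkey : (1+c) * Db t n c - t * Sb t n c = -((n+1) * cb t (n+1) * c^n) :=
    Sb_identity t n c
  have hgc : Db t n c * Real.exp (-t * Real.log (1+c))
        + Sb t n c * (Real.exp (-t * Real.log (1+c)) * (-t * (1/(1+c))))
      = (Real.exp (-t * Real.log (1+c)) / (1+c)) * (-((n+1) * cb t (n+1) * c^n)) := by
    rw [← hkey]; field_simp; ring
  have hEc' : Real.exp (-t * Real.log (1+c)) / (1+c) ≤ 1/(1+x)^2 := by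
    have h1 : (1:ℝ)/(1+c) ≤ 1/(1+x) := by
      apply one_div_le_one_div_of_le h1x; linarith [hc.1]
    calc Real.exp (-t * Real.log (1+c)) / (1+c)
        ≤ (1/(1+c)) * (1/(1+c)) := by
          rw [div_eq_mul_one_div]
          exact mul_le_mul_of_nonneg_right hEc (by positivity)
      _ ≤ (1/(1+x)) * (1/(1+x)) := by
          exact mul_le_mul h1 h1 (by positivity) (by positivity)
      _ = 1/(1+x)^2 := by rw [div_mul_div_comm, one_mul, ← sq]
  have hder_bound : |Db t n c * Real.exp (-t * Real.log (1+c))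
        + Sb t n c * (Real.exp (-t * Real.log (1+c)) * (-t * (1/(1+c))))|
      ≤ |x|^n / (1+x)^2 := by
    rw [hgc, abs_mul, abs_neg, abs_mul, abs_mul, abs_pow]
    have hcb : ((n:ℝ)+1) * |cb t (n+1)| ≤ 1 := by
      have := abs_cb_le t ht n
      calc ((n:ℝ)+1) * |cb t (n+1)| ≤ ((n:ℝ)+1) * (1/((n:ℝ)+1)) := by
            apply mul_le_mul_of_nonneg_left _ (by positivity)
            exact_mod_cast this
        _ = 1 := by field_simp
    have hcn : |c|^n ≤ |x|^n := by
      apply pow_le_pow_left₀ (abs_nonneg c)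
      rw [abs_of_neg hc.2, abs_of_neg hx0]
      linarith [hc.1]
    have habsn : |((n:ℝ)+1)| = (n:ℝ)+1 := abs_of_pos (by positivity)
    have h1 : |Real.exp (-t * Real.log (1+c)) / (1+c)| ≤ 1/(1+x)^2 := by
      rw [abs_of_pos (by positivity)]
      exact hEc'
    calc |Real.exp (-t * Real.log (1+c)) / (1+c)| * (|(n:ℝ)+1| * |cb t (n+1)| * |c|^n)
        ≤ (1/(1+x)^2) * (1 * |x|^n) := by
          apply mul_le_mul h1 _ (by positivity) (by positivity)
          rw [habsn]
          exact mul_le_mul hcb hcn (pow_nonneg (abs_nonneg c) n) zero_le_one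
      _ = |x|^n / (1+x)^2 := by ring
  -- conclude
  have hxne : x ≠ 0 := ne_of_lt hx0
  have : g x - 1 = x * ((g 0 - g x)/(0 - x)) := by
    rw [hg0, ← mul_div_assoc, eq_div_iff (sub_ne_zero.2 (Ne.symm hxne))]
    ring
  have hfinal : |g x - 1| ≤ |x| * (|x|^n / (1+x)^2) := by
    rw [this, abs_mul]
    apply mul_le_mul_of_nonneg_left _ (abs_nonneg x)
    rw [← hslope]
    exact hder_bound
  calc |g x - 1| ≤ |x| * (|x|^n / (1+x)^2) := hfinal
    _ = |x|^(n+1) / (1+x)^2 := by ring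

lemma hasSum_cb (t x : ℝ) (ht : t ∈ Set.Icc (0:ℝ) 1) (hx : x ∈ Set.Ioo (-1:ℝ) 0) :
    HasSum (fun k => cb t k * x^k) (Real.exp (t * Real.log (1+x))) := by
  have hxa : |x| < 1 := abs_lt.2 ⟨hx.1, lt_trans hx.2 one_pos⟩
  have hsumm : Summable (fun k => cb t k * x^k) := by
    apply Summable.of_norm_bounded (summable_geometric_of_lt_one (abs_nonneg x) hxa)
    intro k
    rw [norm_mul, norm_pow]
    calc ‖cb t k‖ * ‖x‖^k ≤ 1 * |x|^k :=
          mul_le_mul_of_nonneg_right (abs_cb_le_one t ht k) (by positivity)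
      _ = |x|^k := one_mul _
  set E := Real.exp (t * Real.log (1+x)) with hEdef
  have hE : (0:ℝ) < E := Real.exp_pos _
  have h1x : (0:ℝ) < 1 + x := by linarith [hx.1]
  have hEiE : Real.exp (-t * Real.log (1+x)) * E = 1 := by
    rw [hEdef, ← Real.exp_add]
    rw [show -t * Real.log (1+x) + t * Real.log (1+x) = 0 by ring, Real.exp_zero]
  have key : ∀ n : ℕ, |Sb t n x - E| ≤ (E/(1+x)^2) * |x|^(n+1) := by
    intro n
    have heq : Sb t n x - E = (Sb t n x * Real.exp (-t * Real.log (1+x)) - 1) * E := by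
      linear_combination (-(Sb t n x)) * hEiE
    rw [heq, abs_mul, abs_of_pos hE]
    calc |Sb t n x * Real.exp (-t * Real.log (1+x)) - 1| * E
        ≤ (|x|^(n+1) / (1+x)^2) * E :=
          mul_le_mul_of_nonneg_right (Sb_dist t n ht hx) hE.le
      _ = (E/(1+x)^2) * |x|^(n+1) := by ring
  have h0 : Filter.Tendsto (fun n : ℕ => (E/(1+x)^2) * |x|^(n+1)) Filter.atTop (nhds 0) := by
    have h1 : Filter.Tendsto (fun n : ℕ => |x|^(n+1)) Filter.atTop (nhds 0) := by
      have := (tendsto_pow_atTop_nhds_zero_of_lt_one (abs_nonneg x) hxa)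
      exact (Filter.tendsto_add_atTop_iff_nat 1).2 this
    simpa using h1.const_mul (E/(1+x)^2)
  have hSb : Filter.Tendsto (fun n : ℕ => Sb t n x) Filter.atTop (nhds E) := by
    rw [tendsto_iff_dist_tendsto_zero]
    apply squeeze_zero (fun n => dist_nonneg) (fun n => ?_) h0
    rw [Real.dist_eq]; exact key n
  have h2 : Filter.Tendsto (fun n : ℕ => ∑ k ∈ Finset.range n, cb t k * x^k)
      Filter.atTop (nhds E) := by
    rw [← Filter.tendsto_add_atTop_iff_nat 1]
    exact hSb
  have := tendsto_nhds_unique hsumm.hasSum.tendsto_sum_nat h2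
  exact this ▸ hsumm.hasSum


lemma continuous_cb (k : ℕ) : Continuous (fun t : ℝ => cb t k) := by
  apply Continuous.div_const
  exact continuous_finset_prod _ (fun j _ => by continuity)

lemma A_eq (k : ℕ) : A k = ∫ t in (0:ℝ)..1, cb t k := by
  rw [A]
  have h1 : (∫ t in (0:ℝ)..1, ∏ j ∈ Finset.range k, (t - 1 + (j:ℝ)))
      = ∫ t in (0:ℝ)..1, ∏ j ∈ Finset.range k, ((1 - t) - 1 + (j:ℝ)) := by
    rw [intervalIntegral.integral_comp_sub_left
      (fun t => ∏ j ∈ Finset.range k, (t - 1 + (j:ℝ))) 1]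
    norm_num
  rw [h1, ← intervalIntegral.integral_const_mul]
  apply intervalIntegral.integral_congr
  intro t _
  have h2 : ∏ j ∈ Finset.range k, ((1-t) - 1 + (j:ℝ))
      = ∏ j ∈ Finset.range k, (-(t - (j:ℝ))) :=
    Finset.prod_congr rfl (fun j _ => by ring)
  have h3 : ∏ j ∈ Finset.range k, (-(t - (j:ℝ)))
      = (-1:ℝ)^k * ∏ j ∈ Finset.range k, (t - (j:ℝ)) := by
    calc ∏ j ∈ Finset.range k, (-(t - (j:ℝ)))
        = ∏ j ∈ Finset.range k, ((-1:ℝ) * (t - (j:ℝ))) := by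
          exact Finset.prod_congr rfl (fun j _ => by ring)
      _ = (∏ _j ∈ Finset.range k, (-1:ℝ)) * ∏ j ∈ Finset.range k, (t - (j:ℝ)) :=
          Finset.prod_mul_distrib
      _ = (-1:ℝ)^k * ∏ j ∈ Finset.range k, (t - (j:ℝ)) := by
          rw [Finset.prod_const, Finset.card_range]
  have h4 : (-1:ℝ)^k * (-1:ℝ)^k = 1 := by
    rw [← pow_add]
    exact Even.neg_one_pow ⟨k, rfl⟩
  simp only [h2, h3, cb]
  field_simp
  linear_combination (∏ j ∈ Finset.range k, (t - (j:ℝ))) * h4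

lemma A_integrable (k : ℕ) {x : ℝ} :
    IntegrableOn (fun t => cb t k * x^k) (Set.Ioc (0:ℝ) 1) :=
  ((continuous_cb k).mul continuous_const).integrableOn_Ioc

lemma hasSum_A {x : ℝ} (hx : x ∈ Set.Ioo (-1:ℝ) 0) :
    HasSum (fun k => A k * x^k) (x / Real.log (1+x)) := by
  obtain ⟨hx1, hx0⟩ := hx
  have h1x : (0:ℝ) < 1 + x := by linarith
  have hL : Real.log (1+x) < 0 := Real.log_neg h1x (by linarith)
  have hLne : Real.log (1+x) ≠ 0 := ne_of_lt hL
  have hxa : |x| < 1 := abs_lt.2 ⟨hx1, by linarith⟩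
  -- summability of integrals of norms
  have hbound : ∀ k : ℕ, (∫ t in Set.Ioc (0:ℝ) 1, ‖cb t k * x^k‖) ≤ |x|^k := by
    intro k
    have : ∀ t ∈ Set.Ioc (0:ℝ) 1, ‖cb t k * x^k‖ ≤ |x|^k := by
      intro t ht
      rw [norm_mul, norm_pow, Real.norm_eq_abs, Real.norm_eq_abs]
      calc |cb t k| * |x|^k ≤ 1 * |x|^k :=
            mul_le_mul_of_nonneg_right
              (abs_cb_le_one t ⟨le_of_lt ht.1, ht.2⟩ k) (by positivity)
        _ = |x|^k := one_mul _
    calc (∫ t in Set.Ioc (0:ℝ) 1, ‖cb t k * x^k‖)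
        ≤ ∫ _ in Set.Ioc (0:ℝ) 1, |x|^k := by
          apply setIntegral_mono_on (A_integrable k).norm
            (integrableOn_const measure_Ioc_lt_top.ne) measurableSet_Ioc this
      _ = |x|^k := by simp
  have hF_sum : Summable (fun k : ℕ => ∫ t in Set.Ioc (0:ℝ) 1, ‖cb t k * x^k‖) := by
    apply Summable.of_nonneg_of_le
      (fun k => integral_nonneg (fun t => norm_nonneg _)) hbound
    exact summable_geometric_of_lt_one (abs_nonneg x) hxa
  have := MeasureTheory.hasSum_integral_of_summable_integral_norm
    (μ := volume.restrict (Set.Ioc (0:ℝ) 1))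
    (F := fun k t => cb t k * x^k) (fun k => A_integrable k) hF_sum
  -- identify the terms
  have hterm : ∀ k : ℕ, (∫ t in Set.Ioc (0:ℝ) 1, cb t k * x^k) = A k * x^k := by
    intro k
    rw [MeasureTheory.integral_mul_const, A_eq,
      intervalIntegral.integral_of_le (by norm_num : (0:ℝ) ≤ 1)]
  -- identify the value
  have hval : (∫ t in Set.Ioc (0:ℝ) 1, ∑' k : ℕ, cb t k * x^k)
      = x / Real.log (1+x) := by
    have hcongr : ∀ t ∈ Set.Ioc (0:ℝ) 1,
        (∑' k : ℕ, cb t k * x^k) = Real.exp (t * Real.log (1+x)) := by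
      intro t ht
      exact (hasSum_cb t x ⟨le_of_lt ht.1, ht.2⟩ ⟨hx1, hx0⟩).tsum_eq
    rw [setIntegral_congr_fun measurableSet_Ioc hcongr]
    rw [← intervalIntegral.integral_of_le (by norm_num : (0:ℝ) ≤ 1)]
    rw [intervalIntegral.integral_comp_mul_right (fun u => Real.exp u) hLne]
    rw [integral_exp]
    rw [zero_mul, one_mul, Real.exp_log h1x, Real.exp_zero]
    rw [smul_eq_mul]
    field_simp; ring
  rw [funext hterm, hval] at this
  exact this


lemma abs_A_le (k : ℕ) : |A (k+1)| ≤ 1/((k:ℝ)+1) := by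
  rw [A_eq]
  have h1 : |∫ t in (0:ℝ)..1, cb t (k+1)| ≤ ∫ t in (0:ℝ)..1, |cb t (k+1)| :=
    intervalIntegral.abs_integral_le_integral_abs (by norm_num)
  have h2 : (∫ t in (0:ℝ)..1, |cb t (k+1)|) ≤ ∫ _t in (0:ℝ)..1, 1/((k:ℝ)+1) := by
    apply intervalIntegral.integral_mono_on (by norm_num)
    · exact ((continuous_cb (k+1)).abs).intervalIntegrable 0 1
    · exact intervalIntegrable_const
    · intro t ht
      exact_mod_cast abs_cb_le t ht k
  calc |∫ t in (0:ℝ)..1, cb t (k+1)| ≤ ∫ _t in (0:ℝ)..1, 1/((k:ℝ)+1) := le_trans h1 h2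
    _ = 1/((k:ℝ)+1) := by simp

lemma A_zero : A 0 = 1 := by
  rw [A_eq]
  simp [cb]

lemma A_one : A 1 = 1/2 := by
  rw [A_eq]
  have : ∀ t : ℝ, cb t 1 = t := by
    intro t; simp [cb]
  simp only [this]
  rw [integral_id]
  norm_num

lemma hasSum_integrand {y : ℝ} (hy : 0 < y) :
    HasSum (fun k : ℕ => A (k+2) * (Real.exp (-y) - 1)^(k+1) * Real.exp (-y))
      (Real.exp (-y) * ((1/2) * rCoth (y/2) - 1/y)) := by
  have hu1 : Real.exp (-y) < 1 := Real.exp_lt_one_iff.2 (by linarith)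
  have hu0 : 0 < Real.exp (-y) := Real.exp_pos _
  set x : ℝ := Real.exp (-y) - 1 with hxdef
  have hx : x ∈ Set.Ioo (-1:ℝ) 0 := ⟨by simp [hxdef]; linarith, by simp [hxdef]; linarith⟩
  have hxne : x ≠ 0 := ne_of_lt hx.2
  have h1x : 1 + x = Real.exp (-y) := by rw [hxdef]; ring
  have hL : Real.log (1+x) = -y := by rw [h1x, Real.log_exp]
  have h := hasSum_A hx
  rw [hL] at h
  have h2 := (hasSum_nat_add_iff' 2).2 h
  have hsum2 : ∑ i ∈ Finset.range 2, A i * x^i = 1 + x/2 := by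
    rw [Finset.sum_range_succ, Finset.sum_range_one, A_zero, A_one]
    ring
  rw [hsum2] at h2
  have h3 := h2.mul_right ((1+x)/x)
  have hfun : (fun n : ℕ => A (n+2) * x^(n+2) * ((1+x)/x))
      = fun n : ℕ => A (n+2) * (Real.exp (-y) - 1)^(n+1) * Real.exp (-y) := by
    funext n
    rw [← hxdef, ← h1x]
    field_simp
    ring
  rw [hfun] at h3
  convert h3 using 1
  · rfl
  -- value identity
  have hyne : y ≠ 0 := ne_of_gt hy
  have hE : Real.exp (y/2) ≠ 0 := Real.exp_ne_zero _
  have hE1 : 1 < Real.exp (y/2) := by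
    rw [show (1:ℝ) = Real.exp 0 from (Real.exp_zero).symm]
    exact Real.exp_lt_exp.2 (by linarith)
  have hsinh : Real.sinh (y/2) = (Real.exp (y/2) - (Real.exp (y/2))⁻¹)/2 := by
    rw [Real.sinh_eq, Real.exp_neg]
  have hcosh : Real.cosh (y/2) = (Real.exp (y/2) + (Real.exp (y/2))⁻¹)/2 := by
    rw [Real.cosh_eq, Real.exp_neg]
  have hexpy : Real.exp (-y) = (Real.exp (y/2))⁻¹ * (Real.exp (y/2))⁻¹ := by
    rw [← Real.exp_neg, ← Real.exp_add]
    congr 1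
    ring
  have hsinh_ne : Real.exp (y/2) - (Real.exp (y/2))⁻¹ ≠ 0 := by
    have : (Real.exp (y/2))⁻¹ < 1 := by
      rw [inv_lt_one_iff₀]; right; exact hE1
    intro hcon
    nlinarith
  have hxne' : (Real.exp (y/2))⁻¹ * (Real.exp (y/2))⁻¹ - 1 ≠ 0 := by
    rw [← hexpy, ← hxdef]; exact hxne
  rw [rCoth, hsinh, hcosh, hxdef, hexpy]
  set E := Real.exp (y/2) with hEdef
  have hE2ne : E^2 - 1 ≠ 0 := by nlinarith
  have hE2ne' : 1 - E^2 ≠ 0 := by intro hcon; apply hE2ne; linarith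
  have hA : (-2 + E^2*2) ≠ 0 := fun hcon => hE2ne (by linarith)
  have hB : (-(E^4*y*2) + E^6*y*2) ≠ 0 := by
    have h : -(E^4*y*2) + E^6*y*2 = 2*y*E^4*(E^2-1) := by ring
    rw [h]
    exact mul_ne_zero (mul_ne_zero (mul_ne_zero two_ne_zero hyne) (pow_ne_zero _ hE)) hE2ne
  have hEE : E*E - 1 ≠ 0 := by
    intro h; exact hE2ne (by rw [pow_two]; exact h)
  have hEE' : (1:ℝ) - E*E ≠ 0 := by
    intro h; exact hEE (by linarith)
  have hd1 : (2:ℝ) * (E*E - 1) ≠ 0 := mul_ne_zero two_ne_zero hEE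
  have hd2 : -(E*E*y*(E*E*2)*(1-E*E)) ≠ 0 := by
    apply neg_ne_zero.2
    exact mul_ne_zero (mul_ne_zero (mul_ne_zero (mul_ne_zero hE hE) hyne)
      (mul_ne_zero (mul_ne_zero hE hE) two_ne_zero)) hEE'
  field_simp
  ring

lemma exp_bound_integrand (k : ℕ) {y : ℝ} (hy : y ∈ Set.Ioi (0:ℝ)) :
    ‖(Real.exp (-y) - 1)^(k+1) * Real.exp (-y)‖ ≤ ‖Real.exp (-1 * y)‖ := by
  have hy0 : (0:ℝ) < y := hy
  have h1 : Real.exp (-y) < 1 := Real.exp_lt_one_iff.2 (by linarith)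
  have h0 : (0:ℝ) < Real.exp (-y) := Real.exp_pos _
  have habs : |Real.exp (-y) - 1| ≤ 1 := abs_le.2 ⟨by linarith, by linarith⟩
  rw [Real.norm_eq_abs, Real.norm_eq_abs, abs_mul, abs_pow, neg_one_mul,
    Real.abs_exp]
  calc |Real.exp (-y) - 1|^(k+1) * Real.exp (-y)
      ≤ 1^(k+1) * Real.exp (-y) := by
        apply mul_le_mul_of_nonneg_right (pow_le_pow_left₀ (abs_nonneg _) habs (k+1)) h0.le
    _ = Real.exp (-y) := by rw [one_pow, one_mul]

lemma integrable_g (k : ℕ) :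
    IntegrableOn (fun y : ℝ => (Real.exp (-y) - 1)^(k+1) * Real.exp (-y)) (Set.Ioi 0) := by
  have hcont : Continuous (fun y : ℝ => (Real.exp (-y) - 1)^(k+1) * Real.exp (-y)) := by
    continuity
  apply Integrable.mono (exp_neg_integrableOn_Ioi 0 one_pos)
    hcont.aestronglyMeasurable.restrict
  rw [ae_restrict_iff' measurableSet_Ioi]
  filter_upwards with y hy
  exact exp_bound_integrand k hy

lemma hasDeriv_exp_neg (y : ℝ) :
    HasDerivAt (fun y : ℝ => Real.exp (-y)) (-Real.exp (-y)) y := by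
  have := ((hasDerivAt_id y).neg).exp
  simpa [mul_comm] using this

lemma exp_term_integral (k : ℕ) :
    ∫ y in Set.Ioi (0:ℝ), (Real.exp (-y) - 1)^(k+1) * Real.exp (-y)
      = (-1)^(k+1) / ((k:ℝ)+2) := by
  set F : ℝ → ℝ := fun y => -(Real.exp (-y) - 1)^(k+2) / ((k:ℝ)+2) with hF
  have hk2 : ((k:ℝ)+2) ≠ 0 := by positivity
  have hderiv : ∀ y ∈ Set.Ioi (0:ℝ),
      HasDerivAt F ((Real.exp (-y) - 1)^(k+1) * Real.exp (-y)) y := by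
    intro y _
    have h2 := (((hasDeriv_exp_neg y).sub_const 1).pow (k+2)).neg.div_const ((k:ℝ)+2)
    convert h2 using 1
    · rfl
    · rfl
    · rfl
    have hn : (k+2) - 1 = k+1 := rfl
    rw [hn]
    push_cast
    field_simp
  have hcont : ContinuousWithinAt F (Set.Ici (0:ℝ)) 0 := by
    apply Continuous.continuousWithinAt
    continuity
  have htends : Filter.Tendsto F Filter.atTop (nhds (-(0-1)^(k+2) / ((k:ℝ)+2))) := by
    apply Filter.Tendsto.div_const
    apply Filter.Tendsto.neg
    apply Filter.Tendsto.pow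
    exact Real.tendsto_exp_neg_atTop_nhds_zero.sub_const 1
  rw [integral_Ioi_of_hasDerivAt_of_tendsto hcont hderiv (integrable_g k) htends]
  have hF0 : F 0 = 0 := by
    rw [hF]; simp
  rw [hF0, sub_zero]
  have h1 : (-(1:ℝ))^(k+2) = (-1)^k := by
    rw [pow_add]; norm_num
  have h2 : (-(1:ℝ))^(k+1) = -(-1)^k := by
    rw [pow_add]; norm_num
  rw [show ((0:ℝ)-1) = -1 by norm_num, h1, h2]

lemma one_sub_exp_integral (k : ℕ) :
    ∫ y in Set.Ioi (0:ℝ), (1 - Real.exp (-y))^(k+1) * Real.exp (-y)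
      = 1 / ((k:ℝ)+2) := by
  set F : ℝ → ℝ := fun y => (1 - Real.exp (-y))^(k+2) / ((k:ℝ)+2) with hF
  have hk2 : ((k:ℝ)+2) ≠ 0 := by positivity
  have hderiv : ∀ y ∈ Set.Ioi (0:ℝ),
      HasDerivAt F ((1 - Real.exp (-y))^(k+1) * Real.exp (-y)) y := by
    intro y _
    have h2 := ((((hasDeriv_exp_neg y).const_sub 1).pow (k+2)).div_const ((k:ℝ)+2))
    convert h2 using 1
    · rfl
    · rfl
    · rfl
    have hn : (k+2) - 1 = k+1 := rfl
    rw [hn]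
    push_cast
    field_simp
  have hcont : ContinuousWithinAt F (Set.Ici (0:ℝ)) 0 := by
    apply Continuous.continuousWithinAt
    continuity
  have hint : IntegrableOn (fun y : ℝ => (1 - Real.exp (-y))^(k+1) * Real.exp (-y)) (Set.Ioi 0) := by
    have hcont2 : Continuous (fun y : ℝ => (1 - Real.exp (-y))^(k+1) * Real.exp (-y)) := by
      continuity
    apply Integrable.mono (exp_neg_integrableOn_Ioi 0 one_pos)
      hcont2.aestronglyMeasurable.restrict
    rw [ae_restrict_iff' measurableSet_Ioi]
    filter_upwards with y hy
    have := exp_bound_integrand k hy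
    rw [Real.norm_eq_abs, Real.norm_eq_abs, abs_mul, abs_pow] at this ⊢
    rwa [abs_sub_comm]
  have htends : Filter.Tendsto F Filter.atTop (nhds ((1-0)^(k+2) / ((k:ℝ)+2))) := by
    apply Filter.Tendsto.div_const
    apply Filter.Tendsto.pow
    exact Real.tendsto_exp_neg_atTop_nhds_zero.const_sub 1
  rw [integral_Ioi_of_hasDerivAt_of_tendsto hcont hderiv hint htends]
  have hF0 : F 0 = 0 := by
    rw [hF]; simp
  rw [hF0, sub_zero]
  norm_num

/-- `∫₀^∞ e^{−y} ((1/2)·coth(y/2) − 1/y) dy = ∑_{k=2}^∞ (−1)^{k+1} A_k / k`,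
where `A_k` are the reciprocal logarithm numbers. -/
theorem integral_coth_eq_sum_recipLog :
    ∫ y in Set.Ioi (0:ℝ), Real.exp (-y) * ((1/2) * rCoth (y/2) - 1/y) =
      ∑' k : ℕ, (-1)^((k+2)+1) * A (k+2) / ((k:ℝ) + 2) := by
  set F : ℕ → ℝ → ℝ :=
    fun k y => A (k+2) * (Real.exp (-y) - 1)^(k+1) * Real.exp (-y) with hFdef
  have hint : ∀ k : ℕ, Integrable (F k) (volume.restrict (Set.Ioi 0)) := by
    intro k
    have := (integrable_g k).const_mul (A (k+2))
    simpa [hFdef, mul_assoc] using this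
  have habsA : ∀ k : ℕ, |A (k+2)| ≤ 1/((k:ℝ)+2) := by
    intro k
    have := abs_A_le (k+1)
    push_cast at this
    convert this using 2 <;> push_cast <;> ring
  have hnormval : ∀ k : ℕ, (∫ y in Set.Ioi (0:ℝ), ‖F k y‖) = |A (k+2)| / ((k:ℝ)+2) := by
    intro k
    have hptwise : ∀ y ∈ Set.Ioi (0:ℝ),
        ‖F k y‖ = |A (k+2)| * ((1 - Real.exp (-y))^(k+1) * Real.exp (-y)) := by
      intro y hy
      have hy0 : (0:ℝ) < y := hy
      have h1 : Real.exp (-y) < 1 := Real.exp_lt_one_iff.2 (by linarith)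
      have h0 : (0:ℝ) < Real.exp (-y) := Real.exp_pos _
      rw [hFdef]
      simp only [Real.norm_eq_abs, abs_mul, abs_pow]
      rw [abs_of_pos h0, abs_of_neg (by linarith : Real.exp (-y) - 1 < 0)]
      ring_nf
    rw [setIntegral_congr_fun measurableSet_Ioi hptwise, integral_const_mul,
      one_sub_exp_integral k]
    ring
  have hmaj : Summable (fun k : ℕ => 1/((k:ℝ)+1)^2) := by
    have h1 : Summable (fun n : ℕ => 1/((n:ℝ))^2) :=
      summable_one_div_nat_pow.2 (by norm_num)
    have h2 := (summable_nat_add_iff 1).2 h1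
    exact h2.congr (fun n => by push_cast; ring)
  have hsum : Summable (fun k : ℕ => ∫ y in Set.Ioi (0:ℝ), ‖F k y‖) := by
    apply Summable.of_nonneg_of_le
      (fun k => integral_nonneg (fun y => norm_nonneg _))
      (fun k => ?_) hmaj
    rw [hnormval k]
    have h1 : |A (k+2)| / ((k:ℝ)+2) ≤ (1/((k:ℝ)+2)) / ((k:ℝ)+2) :=
      div_le_div_of_nonneg_right (habsA k) (by positivity)
    calc |A (k+2)| / ((k:ℝ)+2) ≤ (1/((k:ℝ)+2)) / ((k:ℝ)+2) := h1
      _ = 1/((k:ℝ)+2)^2 := by field_simp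
      _ ≤ 1/((k:ℝ)+1)^2 := by
          apply one_div_le_one_div_of_le (by positivity)
          nlinarith [Nat.cast_nonneg (α := ℝ) k]
  have H := MeasureTheory.hasSum_integral_of_summable_integral_norm hint hsum
  have hterm : ∀ k : ℕ, (∫ y in Set.Ioi (0:ℝ), F k y)
      = (-1)^((k+2)+1) * A (k+2) / ((k:ℝ)+2) := by
    intro k
    have : ∀ y : ℝ, F k y = A (k+2) * ((Real.exp (-y) - 1)^(k+1) * Real.exp (-y)) := by
      intro y; rw [hFdef]; ring
    calc (∫ y in Set.Ioi (0:ℝ), F k y)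
        = ∫ y in Set.Ioi (0:ℝ), A (k+2) * ((Real.exp (-y) - 1)^(k+1) * Real.exp (-y)) :=
          setIntegral_congr_fun measurableSet_Ioi (fun y _ => this y)
      _ = A (k+2) * ((-1)^(k+1) / ((k:ℝ)+2)) := by
          rw [integral_const_mul, exp_term_integral k]
      _ = (-1)^((k+2)+1) * A (k+2) / ((k:ℝ)+2) := by
          have hp : (-1:ℝ)^((k+2)+1) = (-1)^(k+1) := by
            rw [show (k+2)+1 = (k+1)+2 by ring, pow_add]
            norm_num
          rw [hp]
          ring
  have hval : (∫ y in Set.Ioi (0:ℝ), ∑' k, F k y)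
      = ∫ y in Set.Ioi (0:ℝ), Real.exp (-y) * ((1/2) * rCoth (y/2) - 1/y) := by
    apply setIntegral_congr_fun measurableSet_Ioi
    intro y hy
    simp only [hFdef]
    exact (hasSum_integrand hy).tsum_eq
  have H2 : HasSum (fun k : ℕ => (-1:ℝ)^((k+2)+1) * A (k+2) / ((k:ℝ)+2))
      (∫ y in Set.Ioi (0:ℝ), Real.exp (-y) * ((1/2) * rCoth (y/2) - 1/y)) := by
    rw [← hval]
    convert H using 1
    · rfl
    exact funext fun k => (hterm k).symm
  exact H2.tsum_eq.symm
end

section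
/- Let s ∈ ℂ with Re s > 1/2. Then ∫_0^∞ x^{s − 3/2} · log(1 − e^{−√x}) dx = −2·Γ(2s − 1)·ζ(2s), where x^{s−3/2} = exp((s − 3/2)·log x) for x > 0, log(1 − e^{−√x}) is the real logarithm of the number 1 − e^{−√x} ∈ (0,1), Γ is the Gamma function and ζ is the Riemann zeta function. (The Mellin-transform pair produced by equating the M = 0 and M = 1 Mellin–Barnes regularized forms of the Stirling series.) -/
open MeasureTheory

open Set Complex

noncomputable def Faux (a : ℂ) (n : ℕ) (t : ℝ) : ℂ :=
  -((t : ℂ) ^ (a - 1) * ((Real.exp (-t) : ℂ) ^ n / n))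

lemma Faux_norm {a : ℂ} (n : ℕ) {t : ℝ} (ht : 0 < t) :
    ‖Faux a n t‖ = t ^ (a.re - 1) * (Real.exp (-((n:ℝ) * t)) / n) := by
  have h1 : ‖(t : ℂ) ^ (a - 1)‖ = t ^ (a.re - 1) := by
    rw [Complex.norm_cpow_eq_rpow_re_of_pos ht, Complex.sub_re,
      Complex.one_re]
  rw [Faux, norm_neg, norm_mul, h1, norm_div]
  simp only [norm_pow, Complex.norm_real, Real.norm_of_nonneg (Real.exp_pos _).le,
    Complex.norm_natCast]
  rw [← Real.exp_nat_mul, mul_neg]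

lemma Faux_integrable {a : ℂ} (ha : 0 < a.re) (n : ℕ) :
    IntegrableOn (Faux a n) (Ioi 0) := by
  rcases Nat.eq_zero_or_pos n with rfl | hn
  · have : Faux a 0 = fun _ : ℝ => (0:ℂ) := by funext t; simp [Faux]
    rw [this]; exact integrableOn_zero
  have hbound : IntegrableOn (fun t : ℝ => t ^ (a.re - 1) * Real.exp (-(n : ℝ) * t ^ (1:ℝ)))
      (Ioi 0) := integrableOn_rpow_mul_exp_neg_mul_rpow (by linarith) zero_lt_one
    (by exact_mod_cast hn)
  refine Integrable.mono' hbound ?_ ?_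
  · refine AEStronglyMeasurable.neg (ContinuousOn.aestronglyMeasurable
      (ContinuousOn.mul ?_ ?_) measurableSet_Ioi)
    · exact fun t ht => (Complex.continuousAt_ofReal_cpow_const _ _
        (Or.inr (by exact_mod_cast ne_of_gt ht))).continuousWithinAt
    · exact Continuous.continuousOn (by continuity)
  · filter_upwards [ae_restrict_mem measurableSet_Ioi] with t ht
    rw [mem_Ioi] at ht
    rw [Faux_norm n ht, Real.rpow_one]
    have : Real.exp (-((n:ℝ) * t)) / (n : ℝ) ≤ Real.exp (-(n : ℝ) * t) := by
      rw [neg_mul]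
      exact div_le_self (Real.exp_pos _).le (by exact_mod_cast hn)
    exact mul_le_mul_of_nonneg_left this (Real.rpow_nonneg ht.le _)

lemma Faux_integral {a : ℂ} (ha : 0 < a.re) (n : ℕ) :
    ∫ t in Ioi (0:ℝ), Faux a n t = -(Complex.Gamma a * (1 / (n : ℂ) ^ (a + 1))) := by
  rcases Nat.eq_zero_or_pos n with rfl | hn
  · simp [Faux, Complex.zero_cpow (show a + 1 ≠ 0 by
      intro h; have := congrArg Complex.re h; simp at this; linarith)]
  have hn' : (0:ℝ) < n := by exact_mod_cast hn
  have key := integral_cpow_mul_exp_neg_mul_Ioi ha hn'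
  have : ∀ t ∈ Ioi (0:ℝ), Faux a n t
      = -((1:ℂ)/n) * ((t:ℂ) ^ (a-1) * Complex.exp (-(((n:ℝ):ℂ) * (t:ℝ)))) := by
    intro t ht
    simp only [Faux]
    have : ((Real.exp (-t) : ℝ) : ℂ) ^ n = Complex.exp (-(((n:ℝ):ℂ) * (t:ℝ))) := by
      rw [← Complex.ofReal_pow, ← Real.exp_nat_mul, Complex.ofReal_exp]
      congr 1
      push_cast
      ring
    rw [this]; ring
  rw [setIntegral_congr_fun measurableSet_Ioi this, integral_const_mul, key]
  have hne : ((n:ℝ) : ℂ) ≠ 0 := by exact_mod_cast hn'.ne'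
  have harg : Complex.arg ((n:ℝ):ℂ) ≠ Real.pi := by
    rw [Complex.arg_ofReal_of_nonneg hn'.le]; exact Real.pi_ne_zero.symm
  rw [Complex.cpow_add _ _ (by push_cast at hne ⊢; exact hne), Complex.cpow_one]
  rw [show (1:ℂ)/((n:ℝ):ℂ) = (((n:ℝ):ℂ))⁻¹ by ring, Complex.inv_cpow _ _ harg]
  push_cast
  field_simp

lemma core_integral {a : ℂ} (ha : 0 < a.re) :
    ∫ t in Ioi (0:ℝ), (t:ℂ) ^ (a - 1) * (Real.log (1 - Real.exp (-t)) : ℂ)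
      = -(Complex.Gamma a * riemannZeta (a + 1)) := by
  have hsum_norm : Summable (fun n : ℕ => ∫ t in Ioi (0:ℝ), ‖Faux a n t‖) := by
    have hS : Summable (fun n : ℕ => Real.Gamma a.re * (1 / (n:ℝ) ^ (a.re + 1))) :=
      (Real.summable_one_div_nat_rpow.mpr (by linarith)).mul_left _
    refine hS.congr fun n => ?_
    rcases Nat.eq_zero_or_pos n with rfl | hn
    · have : ∀ t ∈ Ioi (0:ℝ), ‖Faux a 0 t‖ = 0 := by intro t ht; simp [Faux]
      rw [setIntegral_congr_fun measurableSet_Ioi this]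
      simp [Real.zero_rpow (by positivity : a.re + 1 ≠ 0)]
    have hn' : (0:ℝ) < n := by exact_mod_cast hn
    have heq : ∀ t ∈ Ioi (0:ℝ), ‖Faux a n t‖
        = (1/(n:ℝ)) * (t ^ (a.re - 1) * Real.exp (-((n:ℝ) * t))) := by
      intro t ht; rw [Faux_norm n (mem_Ioi.mp ht)]; ring
    rw [setIntegral_congr_fun measurableSet_Ioi heq, integral_const_mul,
      Real.integral_rpow_mul_exp_neg_mul_Ioi ha hn']
    rw [Real.rpow_add hn', Real.rpow_one, Real.div_rpow zero_le_one hn'.le,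
      Real.one_rpow]
    simp only [one_div, mul_inv]
    ring
  have hswap := MeasureTheory.integral_tsum_of_summable_integral_norm
    (μ := volume.restrict (Ioi (0:ℝ))) (fun n => Faux_integrable ha n) hsum_norm
  have hpt : ∀ t ∈ Ioi (0:ℝ), ∑' n, Faux a n t
      = (t:ℂ) ^ (a - 1) * (Real.log (1 - Real.exp (-t)) : ℂ) := by
    intro t ht
    rw [mem_Ioi] at ht
    have hz : ‖(Real.exp (-t) : ℂ)‖ < 1 := by
      rw [Complex.norm_real, Real.norm_of_nonneg (Real.exp_pos _).le]
      exact Real.exp_lt_one_iff.mpr (by linarith)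
    have hs := (Complex.hasSum_taylorSeries_neg_log hz).mul_left (-((t:ℂ) ^ (a - 1)))
    have heq : (fun n : ℕ => -((t:ℂ) ^ (a-1)) * ((Real.exp (-t):ℂ) ^ n / n))
        = fun n => Faux a n t := by funext m; simp only [Faux, neg_mul]
    rw [heq] at hs
    rw [hs.tsum_eq, neg_mul_neg]
    congr 1
    have h1 : (1:ℂ) - (Real.exp (-t) : ℂ) = ((1 - Real.exp (-t) : ℝ) : ℂ) := by push_cast; ring
    rw [h1, Complex.ofReal_log (by simp [Real.exp_le_one_iff]; linarith)]
  calc ∫ t in Ioi (0:ℝ), (t:ℂ) ^ (a - 1) * (Real.log (1 - Real.exp (-t)) : ℂ)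
      = ∫ t in Ioi (0:ℝ), ∑' n, Faux a n t :=
        (setIntegral_congr_fun measurableSet_Ioi hpt).symm
    _ = ∑' n, ∫ t in Ioi (0:ℝ), Faux a n t := hswap.symm
    _ = ∑' n : ℕ, -(Complex.Gamma a * (1 / (n : ℂ) ^ (a + 1))) := by
        exact tsum_congr fun n => Faux_integral ha n
    _ = -(Complex.Gamma a * riemannZeta (a + 1)) := by
        rw [zeta_eq_tsum_one_div_nat_cpow (by simp; linarith), tsum_neg, tsum_mul_left]


/-- The Mellin-transform pair produced by equating the `M = 0` and `M = 1`
Mellin–Barnes regularized forms of the Stirling series: for `Re s > 1/2`,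
`∫₀^∞ x^{s − 3/2}·log(1 − e^{−√x}) dx = −2·Γ(2s − 1)·ζ(2s)`. -/
theorem integral_rpow_log_one_sub_exp_neg_sqrt (s : ℂ) (hs : 1/2 < s.re) :
    ∫ x in Set.Ioi (0:ℝ),
        (x:ℂ)^(s - 3/2) * (Real.log (1 - Real.exp (-Real.sqrt x)) : ℂ) =
      -2 * Complex.Gamma (2*s - 1) * riemannZeta (2*s) := by
  set g : ℝ → ℂ := fun x => (x:ℂ)^(s - 3/2) * (Real.log (1 - Real.exp (-Real.sqrt x)) : ℂ)
    with hg
  have hsub := MeasureTheory.integral_comp_rpow_Ioi g (p := 2) two_ne_zero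
  rw [← hsub]
  have hcong : ∀ t ∈ Ioi (0:ℝ), (|(2:ℝ)| * t ^ ((2:ℝ) - 1)) • g (t ^ (2:ℝ))
      = (2:ℂ) * ((t:ℂ) ^ ((2*s - 1) - 1) * (Real.log (1 - Real.exp (-t)) : ℂ)) := by
    intro t ht
    rw [mem_Ioi] at ht
    have h2 : t ^ (2:ℝ) = t ^ (2:ℕ) := by
      rw [← Real.rpow_natCast t 2]; norm_num
    have hsqrt : Real.sqrt (t ^ (2:ℝ)) = t := by
      rw [h2, Real.sqrt_sq ht.le]
    have harg : Complex.arg (t:ℂ) = 0 := Complex.arg_ofReal_of_nonneg ht.le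
    have hpow : ((t ^ (2:ℝ) : ℝ) : ℂ) ^ (s - 3/2) = (t:ℂ) ^ (2*s - 3) := by
      rw [h2, Complex.ofReal_pow]
      rw [← Complex.cpow_ofNat_mul' (by rw [harg]; simp [Real.pi_pos])
        (by rw [harg]; simp [Real.pi_pos.le])]
      congr 1
      ring
    simp only [hg, hsqrt, hpow]
    rw [abs_of_pos two_pos, show (2:ℝ) - 1 = 1 by norm_num, Real.rpow_one, real_smul]
    push_cast
    rw [show (2*s - 1 - 1 : ℂ) = (2*s - 3) + 1 by ring,
      Complex.cpow_add _ _ (by exact_mod_cast ht.ne'), Complex.cpow_one]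
    ring
  rw [setIntegral_congr_fun measurableSet_Ioi hcong, integral_const_mul,
    core_integral (show 0 < (2*s - 1).re by simp [Complex.sub_re, Complex.mul_re]; linarith)]
  rw [show (2*s - 1 + 1 : ℂ) = 2*s by ring]
  ring
end

section
/- Let y > 0 and let c be a real number with c > 1/2. Then (1/(2π)) ∫_{−∞}^{∞} y^{−(c+it)} · ζ(2(c+it)) · Γ(2(c+it) − 1) dt = −(1/(2√y)) · log(1 − e^{−√y}), where y^{−(c+it)} = exp(−(c+it)·log y), ζ is the Riemann zeta function and Γ is the complex Gamma function. (The inverse Mellin–Barnes integral representation of the function −(1/(2√y))·log(1 − e^{−√y}).) -/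
open MeasureTheory

section Aux

open Set Complex Filter

/-- The base kernel `-log(1 - e^{-t})`. -/
noncomputable def mellinBarnesG (t : ℝ) : ℝ := -Real.log (1 - Real.exp (-t))

/-- Complexification of `mellinBarnesG`. -/
noncomputable def mellinBarnesG' (t : ℝ) : ℂ := (mellinBarnesG t : ℂ)

lemma mellinBarnesG_hasSum {t : ℝ} (ht : 0 < t) :
    HasSum (fun n : ℕ => Real.exp (-((n : ℝ) + 1) * t) / ((n : ℝ) + 1)) (mellinBarnesG t) := by
  have hx : |Real.exp (-t)| < 1 := by
    rw [abs_of_pos (Real.exp_pos _)]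
    exact Real.exp_lt_one_iff.mpr (by linarith)
  have := Real.hasSum_pow_div_log_of_abs_lt_one hx
  refine this.congr_fun fun n => ?_
  rw [← Real.exp_nat_mul]
  push_cast
  ring_nf

lemma mellinBarnesG_nonneg {t : ℝ} (ht : 0 < t) : 0 ≤ mellinBarnesG t := by
  have h0 : Real.exp (-t) < 1 := Real.exp_lt_one_iff.mpr (by linarith)
  have h1 : 1 - Real.exp (-t) ≤ 1 := by have := (Real.exp_pos (-t)).le; linarith
  have := Real.log_nonpos (by linarith) h1
  simp only [mellinBarnesG]; linarith

lemma mellinBarnesG_continuousAt {t : ℝ} (ht : 0 < t) : ContinuousAt mellinBarnesG t := by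
  have h0 : Real.exp (-t) < 1 := Real.exp_lt_one_iff.mpr (by linarith)
  have hne : (1 : ℝ) - Real.exp (-t) ≠ 0 := by linarith
  have hcont : ContinuousAt (fun u : ℝ => 1 - Real.exp (-u)) t := by fun_prop
  have := (ContinuousAt.comp (g := Real.log) (f := fun u : ℝ => 1 - Real.exp (-u))
    (Real.continuousAt_log hne) hcont).neg
  exact this

lemma summable_aux {σ : ℝ} (hσ : 0 < σ) :
    Summable fun n : ℕ => ‖(1 : ℂ) / ((n : ℂ) + 1)‖ / ((n : ℝ) + 1) ^ σ := by
  have h : Summable fun n : ℕ => 1 / ((n : ℝ) + 1) ^ (σ + 1) := by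
    have := (Real.summable_one_div_nat_rpow (p := σ + 1)).mpr (by linarith)
    exact_mod_cast (summable_nat_add_iff 1).mpr this
  refine h.congr fun n => ?_
  have hn : (0:ℝ) < (n : ℝ) + 1 := by positivity
  rw [norm_div, norm_one]
  rw [show ((n : ℂ) + 1) = (((n : ℝ) + 1 : ℝ) : ℂ) by push_cast; ring]
  rw [Complex.norm_real, Real.norm_of_nonneg hn.le]
  rw [Real.rpow_add hn, Real.rpow_one]
  field_simp

lemma mellin_mellinBarnesG' {s : ℂ} (hs : 0 < s.re) :
    mellin mellinBarnesG' s = Complex.Gamma s * riemannZeta (s + 1) := by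
  have hsum := summable_aux hs
  have key := hasSum_mellin (F := mellinBarnesG') (a := fun n : ℕ => (1 : ℂ) / ((n : ℂ) + 1))
    (p := fun n : ℕ => (n : ℝ) + 1) (fun n => Or.inr (by positivity)) hs ?_ ?_
  · rw [← key.tsum_eq]
    rw [zeta_eq_tsum_one_div_nat_add_one_cpow (by simp; linarith)]
    rw [← tsum_mul_left]
    congr 1 with n
    have hn : ((n : ℝ) + 1 : ℂ) ≠ 0 := by
      exact_mod_cast (show ((n:ℝ)+1) ≠ 0 by positivity)
    rw [cpow_add _ _ (by push_cast at hn ⊢; exact_mod_cast hn), cpow_one]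
    push_cast
    field_simp
  · intro t ht
    have h := mellinBarnesG_hasSum ht
    have := Complex.hasSum_ofReal.mpr h
    refine this.congr_fun fun n => ?_
    push_cast
    ring
  · exact hsum

lemma term_integrableOn {σ r : ℝ} (hσ : 0 < σ) (hr : 0 < r) :
    IntegrableOn (fun t : ℝ => t ^ (σ - 1) * Real.exp (-(r * t))) (Ioi 0) := by
  have h := Real.GammaIntegral_convergent hσ
  rw [← mul_zero r, ← integrableOn_Ioi_comp_mul_left_iff _ _ hr] at h
  have h2 : IntegrableOn
      (fun x : ℝ => (r ^ (σ - 1))⁻¹ * (Real.exp (-(r * x)) * (r * x) ^ (σ - 1))) (Ioi 0) :=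
    h.const_mul (r ^ (σ - 1))⁻¹
  refine h2.congr_fun (fun t ht => ?_) measurableSet_Ioi
  rw [mem_Ioi] at ht
  dsimp only
  rw [Real.mul_rpow hr.le ht.le]
  field_simp [Real.exp_neg]

lemma integrableOn_mellinBarnesG {σ : ℝ} (hσ : 0 < σ) :
    IntegrableOn (fun t : ℝ => t ^ (σ - 1) * mellinBarnesG t) (Ioi 0) := by
  have hmeas : AEStronglyMeasurable (fun t : ℝ => t ^ (σ - 1) * mellinBarnesG t)
      (volume.restrict (Ioi 0)) := by
    refine (ContinuousOn.aestronglyMeasurable ?_ measurableSet_Ioi)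
    intro t ht
    exact ((Real.continuousAt_rpow_const t _ (Or.inl (ne_of_gt ht))).mul
      (mellinBarnesG_continuousAt ht)).continuousWithinAt
  refine ⟨hmeas, ?_⟩
  rw [hasFiniteIntegral_iff_norm]
  have heq : ∀ᵐ t ∂(volume.restrict (Ioi 0)),
      ENNReal.ofReal ‖t ^ (σ - 1) * mellinBarnesG t‖ =
      ∑' n : ℕ, ENNReal.ofReal (t ^ (σ - 1) * (Real.exp (-((n:ℝ)+1) * t) / ((n:ℝ)+1))) := by
    filter_upwards [ae_restrict_mem measurableSet_Ioi] with t ht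
    rw [mem_Ioi] at ht
    have hs := (mellinBarnesG_hasSum ht).mul_left (t ^ (σ - 1))
    have hnn : 0 ≤ t ^ (σ - 1) * mellinBarnesG t :=
      mul_nonneg (by positivity) (mellinBarnesG_nonneg ht)
    rw [Real.norm_of_nonneg hnn, ← hs.tsum_eq,
      ENNReal.ofReal_tsum_of_nonneg (fun n => by positivity) hs.summable]
  rw [lintegral_congr_ae heq]
  rw [lintegral_tsum (fun n => ?_)]
  · have hval : ∀ n : ℕ, ∫⁻ t in Ioi 0,
        ENNReal.ofReal (t ^ (σ - 1) * (Real.exp (-((n:ℝ)+1) * t) / ((n:ℝ)+1))) =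
        ENNReal.ofReal ((1 / ((n:ℝ)+1)) ^ σ * Real.Gamma σ / ((n:ℝ)+1)) := by
      intro n
      have hn : (0:ℝ) < (n:ℝ) + 1 := by positivity
      have hint : IntegrableOn
          (fun t : ℝ => t ^ (σ - 1) * (Real.exp (-((n:ℝ)+1) * t) / ((n:ℝ)+1))) (Ioi 0) := by
        have h3 : IntegrableOn
            (fun t : ℝ => t ^ (σ - 1) * Real.exp (-(((n:ℝ)+1) * t)) / ((n:ℝ)+1)) (Ioi 0) :=
          (term_integrableOn hσ hn).div_const ((n:ℝ)+1)
        refine h3.congr_fun (fun t ht => by rw [neg_mul]; ring) measurableSet_Ioi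
      rw [← ofReal_integral_eq_lintegral_ofReal ?_ ?_]
      · congr 1
        have := Real.integral_rpow_mul_exp_neg_mul_Ioi hσ hn
        calc ∫ t in Ioi 0, t ^ (σ - 1) * (Real.exp (-((n:ℝ)+1) * t) / ((n:ℝ)+1))
            = (∫ t in Ioi 0, t ^ (σ - 1) * Real.exp (-(((n:ℝ)+1) * t))) / ((n:ℝ)+1) := by
              rw [← integral_div]
              congr 1 with t
              rw [neg_mul]
              ring
          _ = (1 / ((n:ℝ)+1)) ^ σ * Real.Gamma σ / ((n:ℝ)+1) := by rw [this]
      · exact hint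
      · filter_upwards [ae_restrict_mem measurableSet_Ioi] with t ht
        rw [mem_Ioi] at ht
        positivity
    rw [funext hval, ← ENNReal.ofReal_tsum_of_nonneg (fun n => by positivity) ?_]
    · exact ENNReal.ofReal_lt_top
    · have h : Summable fun n : ℕ => 1 / ((n : ℝ) + 1) ^ (σ + 1) := by
        have := (Real.summable_one_div_nat_rpow (p := σ + 1)).mpr (by linarith)
        exact_mod_cast (summable_nat_add_iff 1).mpr this
      refine ((h.mul_left (Real.Gamma σ)).congr fun n => ?_)
      have hn : (0:ℝ) < (n:ℝ) + 1 := by positivity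
      rw [Real.div_rpow (by norm_num) hn.le, Real.one_rpow, Real.rpow_add hn, Real.rpow_one]
      field_simp
  · refine (Measurable.aemeasurable ?_).ennreal_ofReal
    fun_prop

lemma mellinBarnesG'_meas : AEStronglyMeasurable mellinBarnesG' (volume.restrict (Ioi 0)) := by
  refine ContinuousOn.aestronglyMeasurable ?_ measurableSet_Ioi
  intro t ht
  exact (Complex.continuous_ofReal.continuousAt.comp
    (mellinBarnesG_continuousAt ht)).continuousWithinAt

lemma mellinConvergent_mellinBarnesG' {s : ℂ} (hs : 0 < s.re) :
    MellinConvergent mellinBarnesG' s := by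
  rw [MellinConvergent, mellin_convergent_iff_norm Subset.rfl measurableSet_Ioi
    mellinBarnesG'_meas]
  refine (integrableOn_mellinBarnesG hs).congr_fun (fun t ht => ?_) measurableSet_Ioi
  rw [mem_Ioi] at ht
  rw [mellinBarnesG', Complex.norm_real, Real.norm_of_nonneg (mellinBarnesG_nonneg ht)]

lemma norm_Gamma_le {s : ℂ} (hs : 0 < s.re) : ‖Complex.Gamma s‖ ≤ Real.Gamma s.re := by
  rw [Complex.Gamma_eq_integral hs, Complex.GammaIntegral]
  refine (norm_integral_le_integral_norm _).trans_eq ?_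
  rw [Real.Gamma_eq_integral hs]
  refine setIntegral_congr_fun measurableSet_Ioi (fun x hx => ?_)
  rw [mem_Ioi] at hx
  rw [norm_mul, Complex.norm_real, Real.norm_of_nonneg (Real.exp_pos _).le,
    Complex.norm_cpow_eq_rpow_re_of_pos hx, Complex.sub_re,
    Complex.one_re]

lemma norm_zeta_le {s : ℂ} (hs : 1 < s.re) :
    ‖riemannZeta s‖ ≤ ∑' n : ℕ, 1 / ((n : ℝ) + 1) ^ s.re := by
  rw [zeta_eq_tsum_one_div_nat_add_one_cpow hs]
  have hsum : Summable fun n : ℕ => ‖(1:ℂ) / ((n:ℂ) + 1) ^ s‖ := by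
    have h : Summable fun n : ℕ => 1 / ((n : ℝ) + 1) ^ s.re := by
      have := (Real.summable_one_div_nat_rpow (p := s.re)).mpr hs
      exact_mod_cast (summable_nat_add_iff 1).mpr this
    refine h.congr fun n => ?_
    have hn : (0:ℝ) < (n:ℝ) + 1 := by positivity
    rw [norm_div, norm_one, show ((n:ℂ) + 1) = (((n:ℝ)+1 : ℝ) : ℂ) by push_cast; ring,
      Complex.norm_cpow_eq_rpow_re_of_pos hn]
  refine (norm_tsum_le_tsum_norm hsum).trans_eq ?_
  congr 1 with n
  have hn : (0:ℝ) < (n:ℝ) + 1 := by positivity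
  rw [norm_div, norm_one, show ((n:ℂ) + 1) = (((n:ℝ)+1 : ℝ) : ℂ) by push_cast; ring,
    Complex.norm_cpow_eq_rpow_re_of_pos hn]

lemma norm_Gamma_decay {σ : ℝ} (hσ : 0 < σ) (t : ℝ) :
    ‖Complex.Gamma ((σ:ℂ) + t * I)‖ ≤ Real.Gamma (σ + 2) / (σ ^ 2 + t ^ 2) := by
  set z : ℂ := (σ:ℂ) + t * I with hz_def
  have hre : z.re = σ := by simp [hz_def]
  have him : z.im = t := by simp [hz_def]
  have hz : z ≠ 0 := fun h => by rw [h] at hre; simp at hre; linarith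
  have hz1 : z + 1 ≠ 0 := fun h => by
    have : (z + 1).re = 0 := by rw [h]; simp
    simp [hre] at this; linarith
  have h1 : Complex.Gamma (z + 2) = (z + 1) * z * Complex.Gamma z := by
    have e1 := Complex.Gamma_add_one z hz
    have e2 := Complex.Gamma_add_one (z + 1) hz1
    rw [show z + 2 = z + 1 + 1 by ring, e2, e1]; ring
  have habs : ‖z‖ = Real.sqrt (σ ^ 2 + t ^ 2) := by
    rw [Complex.norm_def, Complex.normSq_apply, hre, him]; ring_nf
  have habs1 : ‖z + 1‖ = Real.sqrt ((σ + 1) ^ 2 + t ^ 2) := by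
    rw [Complex.norm_def, Complex.normSq_apply]
    simp [hre, him]
    ring_nf
  have hlow : σ ^ 2 + t ^ 2 ≤ ‖z + 1‖ * ‖z‖ := by
    rw [habs, habs1]
    calc σ ^ 2 + t ^ 2 = Real.sqrt (σ ^ 2 + t ^ 2) * Real.sqrt (σ ^ 2 + t ^ 2) := by
          rw [Real.mul_self_sqrt (by positivity)]
      _ ≤ Real.sqrt ((σ + 1) ^ 2 + t ^ 2) * Real.sqrt (σ ^ 2 + t ^ 2) := by
          have : σ ^ 2 + t ^ 2 ≤ (σ + 1) ^ 2 + t ^ 2 := by nlinarith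
          exact mul_le_mul_of_nonneg_right (Real.sqrt_le_sqrt this) (Real.sqrt_nonneg _)
  have hg2 : ‖Complex.Gamma (z + 2)‖ ≤ Real.Gamma (σ + 2) := by
    have hre2 : (z + 2).re = σ + 2 := by simp [hre]
    have h := norm_Gamma_le (s := z + 2) (by rw [hre2]; linarith)
    rwa [hre2] at h
  have hkey : (σ ^ 2 + t ^ 2) * ‖Complex.Gamma z‖ ≤ Real.Gamma (σ + 2) := by
    calc (σ ^ 2 + t ^ 2) * ‖Complex.Gamma z‖
        ≤ ‖z + 1‖ * ‖z‖ * ‖Complex.Gamma z‖ :=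
          mul_le_mul_of_nonneg_right hlow (norm_nonneg _)
      _ = ‖Complex.Gamma (z + 2)‖ := by rw [h1]; rw [norm_mul, norm_mul]
      _ ≤ Real.Gamma (σ + 2) := hg2
  have hpos : (0:ℝ) < σ ^ 2 + t ^ 2 := by positivity
  rw [le_div_iff₀ hpos]
  linarith [hkey]

lemma vertical_integrable_aux {c : ℝ} (hc : 1/2 < c) :
    Integrable (fun t : ℝ =>
      Complex.Gamma (2 * ((c:ℂ) + t * I) - 1) * riemannZeta (2 * ((c:ℂ) + t * I))) := by
  set σ := 2 * c - 1 with hσ_def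
  have hσ : 0 < σ := by simp [hσ_def]; linarith
  set K := ∑' n : ℕ, 1 / ((n : ℝ) + 1) ^ (2 * c) with hK
  have hK0 : 0 ≤ K := tsum_nonneg (fun n => by positivity)
  set M := Real.Gamma (σ + 2) with hM
  have hM0 : 0 ≤ M := Real.Gamma_nonneg_of_nonneg (by linarith)
  set m := min (σ ^ 2) 1 with hm
  have hm0 : 0 < m := lt_min (by positivity) one_pos
  have hcont : Continuous (fun t : ℝ =>
      Complex.Gamma (2 * ((c:ℂ) + t * I) - 1) * riemannZeta (2 * ((c:ℂ) + t * I))) := by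
    rw [continuous_iff_continuousAt]
    intro t
    have hbase : ContinuousAt (fun t : ℝ => 2 * ((c:ℂ) + t * I)) t := by fun_prop
    have hre2 : (2 * ((c:ℂ) + t * I)).re = 2 * c := by simp
    refine ContinuousAt.mul ?_ ?_
    · refine ContinuousAt.comp ?_
        (by fun_prop : ContinuousAt (fun t : ℝ => 2 * ((c:ℂ) + t * I) - 1) t)
      refine (Complex.differentiableAt_Gamma _ (fun n => ?_)).continuousAt
      intro h
      have := congrArg Complex.re h
      simp at this
      linarith
    · refine ContinuousAt.comp ?_ hbase
      refine (differentiableAt_riemannZeta ?_).continuousAt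
      intro h
      have := congrArg Complex.re h
      rw [hre2] at this
      simp at this
      linarith
  refine Integrable.mono' (g := fun t : ℝ => (M * K / m) * (1 + t ^ 2)⁻¹) ?_
    hcont.aestronglyMeasurable ?_
  · exact integrable_inv_one_add_sq.const_mul _
  · refine Filter.Eventually.of_forall (fun t => ?_)
    have h1 : 2 * ((c:ℂ) + t * I) - 1 = (σ:ℂ) + (2 * t) * I := by
      rw [hσ_def]; push_cast; ring
    have h2 : (2 * ((c:ℂ) + t * I)).re = 2 * c := by simp
    rw [norm_mul, h1]
    have hga := norm_Gamma_decay hσ (2 * t)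
    push_cast at hga
    have hze : ‖riemannZeta (2 * ((c:ℂ) + t * I))‖ ≤ K := by
      have := norm_zeta_le (s := 2 * ((c:ℂ) + t * I)) (by rw [h2]; linarith)
      rwa [h2] at this
    calc ‖Complex.Gamma ((σ:ℂ) + (2*t) * I)‖ * ‖riemannZeta (2 * ((c:ℂ) + t * I))‖
        ≤ (M / (σ ^ 2 + (2*t) ^ 2)) * K := by
          exact mul_le_mul hga hze (norm_nonneg _) (by positivity)
      _ = (M * K) / (σ ^ 2 + (2*t) ^ 2) := by ring
      _ ≤ (M * K) / (m * (1 + t ^ 2)) := by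
          have hm1 : m ≤ σ ^ 2 := min_le_left _ _
          have hm2 : m ≤ 1 := min_le_right _ _
          refine div_le_div_of_nonneg_left (mul_nonneg hM0 hK0) (by positivity) ?_
          nlinarith [sq_nonneg t]
      _ = (M * K / m) * (1 + t ^ 2)⁻¹ := by field_simp

/-- The target function. -/
noncomputable def mellinBarnesF (x : ℝ) : ℂ :=
  ((-(1 / (2 * Real.sqrt x)) * Real.log (1 - Real.exp (-Real.sqrt x)) : ℝ) : ℂ)

lemma mellinBarnesF_eq {x : ℝ} (hx : 0 < x) :
    mellinBarnesF x =
      (x:ℂ) ^ (-(2⁻¹) : ℂ) • ((2⁻¹ : ℂ) • mellinBarnesG' (x ^ (2⁻¹ : ℝ))) := by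
  have hsq : Real.sqrt x = x ^ (2⁻¹ : ℝ) := by
    rw [Real.sqrt_eq_rpow]; norm_num
  have hx2 : (x:ℂ) ^ (-(2⁻¹) : ℂ) = ((x ^ (-(2⁻¹) : ℝ) : ℝ) : ℂ) := by
    rw [Complex.ofReal_cpow hx.le]; norm_num
  rw [smul_eq_mul, smul_eq_mul, mellinBarnesF, mellinBarnesG', mellinBarnesG, hx2, hsq]
  push_cast
  rw [Real.rpow_neg hx.le]
  have h1 : x ^ (2⁻¹ : ℝ) ≠ 0 := by positivity
  field_simp
  push_cast
  ring

lemma mellin_mellinBarnesF {s : ℂ} (hs : 1/2 < s.re) :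
    mellin mellinBarnesF s = Complex.Gamma (2 * s - 1) * riemannZeta (2 * s) := by
  have step1 : mellin mellinBarnesF s =
      mellin (fun x : ℝ =>
        (x:ℂ) ^ (-(2⁻¹) : ℂ) • ((2⁻¹ : ℂ) • mellinBarnesG' (x ^ (2⁻¹ : ℝ)))) s := by
    refine setIntegral_congr_fun measurableSet_Ioi (fun x hx => ?_)
    rw [mem_Ioi] at hx
    rw [mellinBarnesF_eq hx]
  rw [step1, mellin_cpow_smul, mellin_const_smul, mellin_comp_rpow]
  have h1 : ((s + -(2⁻¹)) / (2⁻¹ : ℝ) : ℂ) = 2 * s - 1 := by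
    push_cast
    field_simp
    ring
  rw [h1]
  have h2 : (0:ℝ) < (2 * s - 1).re := by
    simp only [Complex.sub_re, Complex.mul_re, Complex.one_re]
    simp
    linarith
  rw [mellin_mellinBarnesG' h2]
  have h3 : 2 * s - 1 + 1 = 2 * s := by ring
  rw [h3, show |(2⁻¹ : ℝ)| = 2⁻¹ by norm_num, Complex.real_smul, smul_eq_mul]
  push_cast
  ring

lemma mellinConvergent_mellinBarnesF {c : ℝ} (hc : 1/2 < c) :
    MellinConvergent mellinBarnesF c := by
  have base : MellinConvergent mellinBarnesG' (((c:ℂ) + -(2⁻¹)) / (2⁻¹ : ℝ)) := by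
    refine mellinConvergent_mellinBarnesG' ?_
    have : (((c:ℂ) + -(2⁻¹)) / (2⁻¹ : ℝ) : ℂ) = ((2*c - 1 : ℝ) : ℂ) := by
      push_cast; field_simp; ring
    rw [this]
    simp
    linarith
  have h1 : MellinConvergent (fun x : ℝ => mellinBarnesG' (x ^ (2⁻¹ : ℝ))) ((c:ℂ) + -(2⁻¹)) :=
    (MellinConvergent.comp_rpow (by norm_num)).mpr base
  have h2 := (h1.const_smul ((2⁻¹ : ℂ)))
  have h3 : MellinConvergent
      (fun x : ℝ =>
        (x:ℂ) ^ (-(2⁻¹) : ℂ) • ((2⁻¹ : ℂ) • mellinBarnesG' (x ^ (2⁻¹ : ℝ)))) c := by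
    refine MellinConvergent.cpow_smul.mpr ?_
    convert h2 using 2
  refine h3.congr_fun (fun x hx => ?_) measurableSet_Ioi
  rw [mem_Ioi] at hx
  rw [mellinBarnesF_eq hx]

lemma mellinBarnesF_continuousAt {y : ℝ} (hy : 0 < y) : ContinuousAt mellinBarnesF y := by
  have hsy : 0 < Real.sqrt y := Real.sqrt_pos.mpr hy
  have h0 : Real.exp (-Real.sqrt y) < 1 := Real.exp_lt_one_iff.mpr (by linarith)
  have hne : (1 : ℝ) - Real.exp (-Real.sqrt y) ≠ 0 := by linarith
  have hc1 : ContinuousAt (fun x : ℝ => 1 - Real.exp (-Real.sqrt x)) y := by fun_prop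
  have hlog : ContinuousAt (fun x : ℝ => Real.log (1 - Real.exp (-Real.sqrt x))) y :=
    ContinuousAt.comp (g := Real.log) (Real.continuousAt_log hne) hc1
  have hd : (2 : ℝ) * Real.sqrt y ≠ 0 := by positivity
  have hc2 : ContinuousAt (fun x : ℝ => -(1 / (2 * Real.sqrt x))) y := by
    have h := ContinuousAt.div (continuousAt_const : ContinuousAt (fun _ : ℝ => (1:ℝ)) y)
      (by fun_prop : ContinuousAt (fun x : ℝ => 2 * Real.sqrt x) y) hd
    exact h.neg
  have := (hc2.mul hlog)
  exact Complex.continuous_ofReal.continuousAt.comp this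

end Aux

/-- The inverse Mellin–Barnes integral representation of
`−(1/(2√y))·log(1 − e^{−√y})`: for `y > 0` and any real `c > 1/2`,
`(1/(2π)) ∫_{−∞}^{∞} y^{−(c+it)}·ζ(2(c+it))·Γ(2(c+it) − 1) dt
  = −(1/(2√y))·log(1 − e^{−√y})`. -/
theorem inverse_mellinBarnes_log_one_sub_exp_neg_sqrt (y : ℝ) (hy : 0 < y)
    (c : ℝ) (hc : 1/2 < c) :
    (1 / (2 * (Real.pi : ℂ))) *
        ∫ t : ℝ, (y:ℂ)^(-((c:ℂ) + (t:ℂ) * Complex.I)) *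
          riemannZeta (2 * ((c:ℂ) + (t:ℂ) * Complex.I)) *
          Complex.Gamma (2 * ((c:ℂ) + (t:ℂ) * Complex.I) - 1) =
      ((-(1 / (2 * Real.sqrt y)) * Real.log (1 - Real.exp (-Real.sqrt y)) : ℝ) : ℂ) := by
  have hvert : Complex.VerticalIntegrable (mellin mellinBarnesF) c := by
    refine (vertical_integrable_aux hc).congr ?_
    refine Filter.Eventually.of_forall (fun t => ?_)
    have hre : ((c:ℂ) + (t:ℂ) * Complex.I).re = c := by simp
    dsimp only
    rw [mellin_mellinBarnesF (by rw [hre]; exact hc)]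
  have hinv := mellinInv_mellin_eq c mellinBarnesF hy (mellinConvergent_mellinBarnesF hc) hvert
    (mellinBarnesF_continuousAt hy)
  rw [mellinInv] at hinv
  have hint : (∫ t : ℝ, (y:ℂ) ^ (-((c:ℂ) + (t:ℂ) * Complex.I)) •
      mellin mellinBarnesF ((c:ℂ) + (t:ℂ) * Complex.I)) =
      ∫ t : ℝ, (y:ℂ)^(-((c:ℂ) + (t:ℂ) * Complex.I)) *
          riemannZeta (2 * ((c:ℂ) + (t:ℂ) * Complex.I)) *
          Complex.Gamma (2 * ((c:ℂ) + (t:ℂ) * Complex.I) - 1) := by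
    refine integral_congr_ae (Filter.Eventually.of_forall (fun t => ?_))
    have hre : ((c:ℂ) + (t:ℂ) * Complex.I).re = c := by simp
    dsimp only
    rw [smul_eq_mul, mellin_mellinBarnesF (by rw [hre]; exact hc)]
    ring
  rw [hint] at hinv
  have hconst : ((1 / (2 * Real.pi) : ℝ) : ℂ) = 1 / (2 * (Real.pi : ℂ)) := by push_cast; ring
  rw [← hconst]
  rw [show ((-(1 / (2 * Real.sqrt y)) * Real.log (1 - Real.exp (-Real.sqrt y)) : ℝ) : ℂ) =
    mellinBarnesF y from rfl]
  rw [← hinv]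
  rw [Complex.real_smul]
end
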